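/- arXiv:1212.0052 — 11 statements merged into one kernel-verified Lean document; each statement's English description precedes it below -/
import Mathlib

section
/- Let $w$ be an infinite binary word. Then $w$ contains a circular $4$-power; that is, there exist words $x_1, t, x_2$ with $x_2 x_1$ nonempty such that $x_1 t x_2$ is a factor of $w$ and $x_2 x_1$ is a $4$-power (a word of the form $z^4$ for some nonempty word $z$). -/
/-- `u` occurs as a factor of the infinite word `w` (at some position `i`). -/
def FactorOf {α : Type*} (u : List α) (w : ℕ → α) : Prop :=
  ∃ i : ℕ, u = (List.range u.length).map (fun k => w (i + k))

lemma factor_glue {α : Type*} (w : ℕ → α) (u : List α) (p q : ℕ)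
    (hu1 : u = (List.range u.length).map (fun k => w (p + k)))
    (hu2 : u = (List.range u.length).map (fun k => w (q + k)))
    (hpq : p + u.length ≤ q) :
    ∃ t : List α, FactorOf (u ++ t ++ u) w := by
  set L := u.length with hL
  set M := q - (p + L) with hM
  refine ⟨(List.range M).map (fun k => w (p + L + k)), p, ?_⟩
  have hlen : (u ++ (List.range M).map (fun k => w (p + L + k)) ++ u).length = L + M + L := by
    simp [hL]; omega
  rw [hlen, List.range_add, List.range_add, List.map_append, List.map_append,
    List.map_map, List.map_map]
  have A : List.map ((fun k => w (p + k)) ∘ fun x => L + x) (List.range M)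
      = List.map (fun k => w (p + L + k)) (List.range M) := by
    apply List.map_congr_left
    intro k _
    simp [Function.comp, Nat.add_assoc]
  have B : List.map ((fun k => w (p + k)) ∘ fun x => L + M + x) (List.range L) = u := by
    rw [hu2]
    apply List.map_congr_left
    intro k _
    have hq : p + (L + M) = q := by omega
    simp only [Function.comp]
    rw [← Nat.add_assoc, hq]
  rw [A, B, ← hu1]

lemma main_helper (w : ℕ → Fin 2) (z : List (Fin 2)) (hz : z ≠ []) (p q : ℕ)
    (h1 : z ++ z = (List.range (z ++ z).length).map (fun k => w (p + k)))
    (h2 : z ++ z = (List.range (z ++ z).length).map (fun k => w (q + k)))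
    (hpq : p + (z ++ z).length ≤ q) :
    ∃ x₁ t x₂ zz : List (Fin 2), zz ≠ [] ∧ FactorOf (x₁ ++ t ++ x₂) w ∧
      x₂ ++ x₁ = zz ++ zz ++ zz ++ zz := by
  obtain ⟨t, ht⟩ := factor_glue w (z ++ z) p q h1 h2 hpq
  exact ⟨z ++ z, t, z ++ z, z, hz, ht, by simp [List.append_assoc]⟩

/-- every infinite binary word contains a circular 4-power. -/
theorem infinite_binary_contains_circular_fourth_power (w : ℕ → Fin 2) :
    ∃ x₁ t x₂ z : List (Fin 2), z ≠ [] ∧ FactorOf (x₁ ++ t ++ x₂) w ∧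
      x₂ ++ x₁ = z ++ z ++ z ++ z := by
  classical
  set f : ℕ → Fin 2 × Fin 2 × Fin 2 × Fin 2 :=
    fun n => (w (4*n), w (4*n+1), w (4*n+2), w (4*n+3)) with hf
  obtain ⟨y, hy⟩ := Finite.exists_infinite_fiber f
  have hS : (f ⁻¹' {y}).Infinite := Set.infinite_coe_iff.mp hy
  obtain ⟨n₁, hn₁⟩ := hS.nonempty
  obtain ⟨n₂, hn₂, hlt⟩ := hS.exists_gt n₁
  obtain ⟨a, b, c, d⟩ := y
  have e1 : w (4*n₁) = a ∧ w (4*n₁+1) = b ∧ w (4*n₁+2) = c ∧ w (4*n₁+3) = d := by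
    have := hn₁; simp [hf, Set.mem_preimage, Prod.ext_iff] at this; tauto
  have e2 : w (4*n₂) = a ∧ w (4*n₂+1) = b ∧ w (4*n₂+2) = c ∧ w (4*n₂+3) = d := by
    have := hn₂; simp [hf, Set.mem_preimage, Prod.ext_iff] at this; tauto
  obtain ⟨ha1, hb1, hc1, hd1⟩ := e1
  obtain ⟨ha2, hb2, hc2, hd2⟩ := e2
  have hcases : a = b ∨ b = c ∨ c = d ∨ (a = c ∧ b = d) := by
    have : ∀ a b c d : Fin 2, a = b ∨ b = c ∨ c = d ∨ (a = c ∧ b = d) := by decide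
    exact this a b c d
  have h4 : 4 * n₁ + 4 ≤ 4 * n₂ := by omega
  rcases hcases with h | h | h | ⟨h1, h2⟩
  · -- z = [a], square at offset 0
    refine main_helper w [a] (by simp) (4*n₁) (4*n₂) ?_ ?_ (by simpa using by omega)
    · simp [List.range_succ, ha1, hb1, ← h]
    · simp [List.range_succ, ha2, hb2, ← h]
  · -- z = [b], square at offset 1
    refine main_helper w [b] (by simp) (4*n₁+1) (4*n₂+1) ?_ ?_ (by simpa using by omega)
    · simp [List.range_succ, hb1, hc1, ← h, show 4*n₁+1+1 = 4*n₁+2 by omega]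
    · simp [List.range_succ, hb2, hc2, ← h, show 4*n₂+1+1 = 4*n₂+2 by omega]
  · -- z = [c], square at offset 2
    refine main_helper w [c] (by simp) (4*n₁+2) (4*n₂+2) ?_ ?_ (by simpa using by omega)
    · simp [List.range_succ, hc1, hd1, ← h, show 4*n₁+2+1 = 4*n₁+3 by omega]
    · simp [List.range_succ, hc2, hd2, ← h, show 4*n₂+2+1 = 4*n₂+3 by omega]
  · -- z = [a, b], square at offset 0
    refine main_helper w [a, b] (by simp) (4*n₁) (4*n₂) ?_ ?_ (by simpa using by omega)
    · simp [List.range_succ, ha1, hb1, hc1, hd1, h1, h2]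
    · simp [List.range_succ, ha2, hb2, hc2, hd2, h1, h2]
end

section
/- If an infinite word $w$ over an alphabet of size $k$ avoids $\alpha^+$-powers (i.e., no factor of $w$ has exponent exceeding $\alpha$), then $w$ is circularly $(2\alpha)^+$-power-free: for all words $x_1, t, x_2$ with $x_1 t x_2$ a factor of $w$, the word $x_2 x_1$ is not a $\beta$-power for any $\beta > 2\alpha$. -/
/-- `p` is a period of the finite word `v`. -/
def HasPeriod {α : Type*} (v : List α) (p : ℕ) : Prop :=
  0 < p ∧ p ≤ v.length ∧ ∀ i : ℕ, i + p < v.length → v[i + p]? = v[i]?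

lemma factorOf_append_left {α : Type*} {u v : List α} {w : ℕ → α}
    (h : FactorOf (u ++ v) w) : FactorOf u w := by
  obtain ⟨i, hi⟩ := h
  refine ⟨i, ?_⟩
  have := congrArg (List.take u.length) hi
  simpa [List.take_left, ← List.map_take, List.take_range,
    Nat.min_eq_left (by simp : u.length ≤ (u ++ v).length)] using this

lemma factorOf_append_right {α : Type*} {u v : List α} {w : ℕ → α}
    (h : FactorOf (u ++ v) w) : FactorOf v w := by
  obtain ⟨i, hi⟩ := h
  refine ⟨i + u.length, ?_⟩
  have := congrArg (List.drop u.length) hi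
  simp only [List.drop_left, List.length_append, List.range_add, List.map_append,
    List.map_map] at this
  rw [List.drop_append_of_le_length (by simp), List.drop_eq_nil_of_le (by simp),
    List.nil_append] at this
  simpa [Function.comp, Function.comp_def, Nat.add_comm, Nat.add_assoc, Nat.add_left_comm] using this

lemma hasPeriod_append_left {α : Type*} {u v : List α} {p : ℕ}
    (h : HasPeriod (u ++ v) p) (hp : p ≤ u.length) : HasPeriod u p := by
  obtain ⟨h0, -, hper⟩ := h
  refine ⟨h0, hp, fun i hi => ?_⟩
  have h1 := hper i (by simp; omega)
  rwa [List.getElem?_append_left (by omega), List.getElem?_append_left (by omega)] at h1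

lemma hasPeriod_append_right {α : Type*} {u v : List α} {p : ℕ}
    (h : HasPeriod (u ++ v) p) (hp : p ≤ v.length) : HasPeriod v p := by
  obtain ⟨h0, -, hper⟩ := h
  refine ⟨h0, hp, fun i hi => ?_⟩
  have h1 := hper (u.length + i) (by simp; omega)
  rw [List.getElem?_append_right (by omega), List.getElem?_append_right (by omega)] at h1
  have e1 : u.length + i + p - u.length = i + p := by omega
  have e2 : u.length + i - u.length = i := by omega
  rwa [e1, e2] at h1

/-- an `α⁺`-power-free word is circularly `(2α)⁺`-power-free. -/
theorem power_free_imp_circularly_double_power_free {k : ℕ} (a : ℚ) (ha : 1 ≤ a)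
    (w : ℕ → Fin k)
    (hfree : ∀ (v : List (Fin k)) (p : ℕ), FactorOf v w → HasPeriod v p →
      (v.length : ℚ) ≤ a * p) :
    ∀ (x₁ t x₂ : List (Fin k)) (p : ℕ), FactorOf (x₁ ++ t ++ x₂) w →
      HasPeriod (x₂ ++ x₁) p → ((x₂ ++ x₁).length : ℚ) ≤ 2 * a * p := by
  intro x₁ t x₂ p hfac hper
  obtain ⟨hp0, hple, -⟩ := id hper
  have hfac1 : FactorOf x₁ w := by
    rw [List.append_assoc] at hfac
    exact factorOf_append_left hfac
  have hfac2 : FactorOf x₂ w := factorOf_append_right hfac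
  have hpq : (0 : ℚ) < p := by exact_mod_cast hp0
  have key : ∀ u : List (Fin k), FactorOf u w → HasPeriod u p ∨ u.length ≤ p →
      (u.length : ℚ) ≤ a * p := by
    intro u hu hcase
    rcases hcase with h | h
    · exact hfree u p hu h
    · calc (u.length : ℚ) ≤ p := by exact_mod_cast h
        _ = 1 * p := (one_mul _).symm
        _ ≤ a * p := by gcongr
  have h1 : (x₁.length : ℚ) ≤ a * p := by
    refine key x₁ hfac1 ?_
    rcases le_or_gt x₁.length p with h | h
    · exact Or.inr h
    · exact Or.inl (hasPeriod_append_right hper h.le)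
  have h2 : (x₂.length : ℚ) ≤ a * p := by
    refine key x₂ hfac2 ?_
    rcases le_or_gt x₂.length p with h | h
    · exact Or.inr h
    · exact Or.inl (hasPeriod_append_left hper h.le)
  have : ((x₂ ++ x₁).length : ℚ) = x₂.length + x₁.length := by
    simp [List.length_append]
  rw [this]
  linarith
end

section
/- Suppose every word of length $n$ over $\Sigma_k$ contains an $r$-power (for a rational $r \geq 1$). Then every infinite word $w$ over $\Sigma_k$ contains a circular $(1+r)$-power: there exist a nonempty word $z$, a rational $\beta \geq 1+r$, and words $x_1, t, x_2$ such that $x_1 t x_2$ is a factor of $w$ and $x_2 x_1$ is a $\beta$-power with period $z$. -/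
/-- `u` is an `r`-power with period `z`: `z` is nonempty, `u` begins with `z`,
`|z|` is a period of `u`, and `|u| = r·|z|`. -/
def IsPowOf {α : Type*} (u z : List α) (r : ℚ) : Prop :=
  z ≠ [] ∧ z <+: u ∧ (∀ i : ℕ, i + z.length < u.length → u[i + z.length]? = u[i]?) ∧
    (u.length : ℚ) = r * z.length

private lemma range_map_add {α : Type*} (f : ℕ → α) (c a b : ℕ) :
    (List.range a).map (fun m => f (c + m)) ++ (List.range b).map (fun m => f (c + a + m))
      = (List.range (a + b)).map (fun m => f (c + m)) := by
  rw [List.range_add, List.map_append, List.map_map]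
  congr 1
  apply List.map_congr_left
  intro m _
  simp only [Function.comp_apply]
  exact congrArg f (by omega)

private lemma getElem?_range_map {α : Type*} (f : ℕ → α) {a i : ℕ} (h : i < a) :
    ((List.range a).map f)[i]? = some (f i) := by
  simp [List.getElem?_map, List.getElem?_range, h]

/-- if every length-`n` word over `Σ_k` contains an `r`-power, then every
infinite word over `Σ_k` contains a circular `(1+r)`-power. -/
theorem unavoidable_circular_power {k n : ℕ} (r : ℚ) (hr : 1 ≤ r)
    (hn : ∀ v : List (Fin k), v.length = n → ∃ u z : List (Fin k), u <:+: v ∧ IsPowOf u z r)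
    (w : ℕ → Fin k) :
    ∃ (z : List (Fin k)) (β : ℚ) (x₁ t x₂ : List (Fin k)),
      1 + r ≤ β ∧ FactorOf (x₁ ++ t ++ x₂) w ∧ IsPowOf (x₂ ++ x₁) z β := by
  classical
  -- pigeonhole: two occurrences of the same length-n factor, far apart
  obtain ⟨a, b, hab, he⟩ : ∃ a b : ℕ, a < b ∧
      ∀ j < n, w (a * (n + 1) + j) = w (b * (n + 1) + j) := by
    obtain ⟨a, b, hne, he⟩ := Finite.exists_ne_map_eq_of_infinite
      (fun m : ℕ => fun j : Fin n => w (m * (n + 1) + j.val))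
    have key : ∀ j < n, w (a * (n + 1) + j) = w (b * (n + 1) + j) := by
      intro j hj
      exact congrFun he ⟨j, hj⟩
    rcases lt_or_gt_of_ne hne with h | h
    · exact ⟨a, b, h, key⟩
    · exact ⟨b, a, h, fun j hj => (key j hj).symm⟩
  set A := a * (n + 1) with hA
  set B := b * (n + 1) with hB
  have hABgap : A + n + 1 ≤ B := by
    have h1 : (a + 1) * (n + 1) ≤ b * (n + 1) := Nat.mul_le_mul_right _ hab
    have h2 : (a + 1) * (n + 1) = a * (n + 1) + (n + 1) := by ring
    omega
  -- apply hn to the factor at position A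
  set v : List (Fin k) := (List.range n).map (fun j => w (A + j)) with hv
  have hvlen : v.length = n := by simp [hv]
  obtain ⟨u, z, hinfix, hz0, hzpre, hper, hlen⟩ := hn v hvlen
  obtain ⟨pre, suf, hvdec⟩ := hinfix
  set p := z.length with hpdef
  set L := u.length with hLdef
  have hp : 0 < p := List.length_pos_iff.mpr hz0
  have hpL : p ≤ L := hzpre.length_le
  have hdeclen : pre.length + L + suf.length = n := by
    have h := congrArg List.length hvdec
    simp [hvlen] at h
    omega
  set i₀ := A + pre.length with hi₀
  set j₀ := B + pre.length with hj₀
  -- entries of u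
  have hvget : ∀ idx, idx < n → v[idx]? = some (w (A + idx)) := by
    intro idx hidx
    rw [hv, getElem?_range_map _ hidx]
  have hu_i : ∀ m, m < L → u[m]? = some (w (i₀ + m)) := by
    intro m hm
    have h1 : (pre ++ u ++ suf)[pre.length + m]? = u[m]? := by
      rw [List.getElem?_append_left (by simp; omega)]
      rw [List.getElem?_append_right (by omega)]
      rw [Nat.add_sub_cancel_left]
    have h2 := hvget (pre.length + m) (by omega)
    rw [← hvdec, h1] at h2
    rw [h2]
    exact congrArg some (congrArg w (by omega))
  have hu_j : ∀ m, m < L → w (j₀ + m) = w (i₀ + m) := by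
    intro m hm
    have h := he (pre.length + m) (by omega)
    have e1 : A + (pre.length + m) = i₀ + m := by omega
    have e2 : B + (pre.length + m) = j₀ + m := by omega
    rw [e1, e2] at h
    exact h.symm
  have hperw : ∀ i, i + p < L → w (i₀ + (i + p)) = w (i₀ + i) := by
    intro i hi
    have h := hper i hi
    rw [hu_i _ hi, hu_i _ (by omega)] at h
    exact Option.some_injective _ h
  have hmod : ∀ j, j < L → w (i₀ + j) = w (i₀ + j % p) := by
    intro j
    induction j using Nat.strong_induction_on with
    | _ j ih =>
      intro hj
      rcases lt_or_ge j p with h | h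
      · rw [Nat.mod_eq_of_lt h]
      · have h1 : (j - p) + p < L := by omega
        have h2 := hperw (j - p) h1
        have e : i₀ + (j - p + p) = i₀ + j := by omega
        rw [e] at h2
        rw [h2, ih (j - p) (by omega) (by omega)]
        congr 1
        have e2 : j % p = (j - p + p) % p := by rw [Nat.sub_add_cancel h]
        rw [e2, Nat.add_mod_right]
  set s := L % p with hsdef
  have hs : s < p := Nat.mod_lt _ hp
  have hqd : p * (L / p) + s = L := Nat.div_add_mod L p
  have hq1 : 1 ≤ L / p := (Nat.one_le_div_iff hp).mpr hpL
  have hsp : s + p ≤ L := by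
    have h3 : p * 1 ≤ p * (L / p) := Nat.mul_le_mul_left p hq1
    omega
  set I := i₀ + s with hI
  have hLn : L ≤ n := by omega
  have hgap : I + p ≤ j₀ := by omega
  set tl := j₀ - (I + p) with htl
  set x₁ : List (Fin k) := (List.range p).map (fun m => w (I + m)) with hx₁
  set t : List (Fin k) := (List.range tl).map (fun m => w (I + p + m)) with ht
  set x₂ : List (Fin k) := (List.range L).map (fun m => w (j₀ + m)) with hx₂
  have hx₂len : x₂.length = L := by simp [hx₂]
  have hx₁len : x₁.length = p := by simp [hx₁]
  have hux₂ : u = x₂ := by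
    apply List.ext_getElem?
    intro i
    rcases lt_or_ge i L with hi | hi
    · rw [hu_i i hi, hx₂, getElem?_range_map _ hi]
      exact congrArg some (hu_j i hi).symm
    · rw [List.getElem?_eq_none (by omega), List.getElem?_eq_none (by omega)]
  -- entries of x₂ ++ x₁
  have hcat : ∀ i, i < L → (x₂ ++ x₁)[i]? = some (w (i₀ + i)) := by
    intro i hi
    rw [List.getElem?_append_left (by omega), hx₂, getElem?_range_map _ hi]
    exact congrArg some (hu_j i hi)
  have hcat2 : ∀ i, L ≤ i → i < L + p → (x₂ ++ x₁)[i]? = some (w (I + (i - L))) := by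
    intro i hi1 hi2
    rw [List.getElem?_append_right (by omega), hx₂len, hx₁,
      getElem?_range_map _ (by omega)]
  refine ⟨z, 1 + r, x₁, t, x₂, le_refl _, ?_, ?_, ?_, ?_, ?_⟩
  · -- FactorOf
    refine ⟨I, ?_⟩
    have e1 : t ++ x₂ = (List.range (tl + L)).map (fun m => w (I + p + m)) := by
      rw [ht, hx₂]
      have e0 : (fun m => w (j₀ + m)) = (fun m => w (I + p + tl + m)) := by
        funext m; exact congrArg w (by omega)
      rw [e0]
      exact range_map_add w (I + p) tl L
    have e2 : x₁ ++ (t ++ x₂) = (List.range (p + (tl + L))).map (fun m => w (I + m)) := by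
      rw [e1, hx₁]
      exact range_map_add w I p (tl + L)
    have hlen3 : (x₁ ++ t ++ x₂).length = p + (tl + L) := by
      simp [hx₁, ht, hx₂, Nat.add_assoc]
    rw [hlen3, List.append_assoc, e2]
  · exact hz0
  · exact hzpre.trans (hux₂ ▸ (x₂.prefix_append x₁))
  · -- period
    intro i hi
    have hcatlen : (x₂ ++ x₁).length = L + p := by simp [hx₂len, hx₁len]
    have hiL : i < L := by omega
    rw [hcat i hiL]
    rcases lt_or_ge (i + p) L with h | h
    · rw [hcat (i + p) h]
      exact congrArg some (hperw i h)
    · rw [hcat2 (i + p) h (by omega)]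
      have e1 : I + (i + p - L) = i₀ + (i + p + s - L) := by omega
      set j₁ := i + p + s - L with hj₁
      have hj₁L : j₁ < L := by omega
      have hmodeq : j₁ % p = i % p := by
        have hEq : j₁ + p * (L / p) = i + p := by omega
        calc j₁ % p = (j₁ + p * (L / p)) % p := by
              rw [Nat.mul_comm, Nat.add_mul_mod_self_right]
          _ = (i + p) % p := by rw [hEq]
          _ = i % p := Nat.add_mod_right i p
      rw [e1, hmod j₁ hj₁L, hmodeq, ← hmod i hiL]
  · -- length
    have hcatlen : (x₂ ++ x₁).length = L + p := by simp [hx₂len, hx₁len]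
    rw [hcatlen]
    push_cast
    rw [hlen]
    ring
end

section
/- Let $h:\Sigma^* \to \Gamma^*$ be a synchronizing $q$-uniform morphism, let $n > 1$ be an integer, and let $w \in \Sigma^*$. If $z^n$ is a prefix of $h(w)$ for some word $z$ with $|z| \geq q$, then $|z| \equiv 0 \pmod q$ and there exists a word $u$ with $u^n$ a prefix of $w$. -/
/-- The extension of a morphism `h` (given on letters) to finite words. -/
def applyMorphism {α β : Type*} (h : α → List β) (l : List α) : List β :=
  (l.map h).flatten

/-- `h` is a synchronizing morphism. -/
def Synchronizing {α β : Type*} (h : α → List β) : Prop :=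
  ∀ (a b c : α) (r s : List β), h a ++ h b = r ++ h c ++ s →
    (r = [] ∧ a = c) ∨ (s = [] ∧ b = c)

namespace SyncAux

variable {α β : Type*} (h : α → List β)

lemma am_nil : applyMorphism h ([] : List α) = [] := rfl

lemma am_cons (a : α) (l : List α) :
    applyMorphism h (a :: l) = h a ++ applyMorphism h l := by
  simp [applyMorphism]

lemma am_append (u v : List α) :
    applyMorphism h (u ++ v) = applyMorphism h u ++ applyMorphism h v := by
  simp [applyMorphism]

lemma am_length (q : ℕ) (huni : ∀ a : α, (h a).length = q) (l : List α) :
    (applyMorphism h l).length = q * l.length := by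
  induction l with
  | nil => simp [am_nil]
  | cons a t ih => simp [am_cons, huni, ih]; ring

lemma am_take (q : ℕ) (huni : ∀ a : α, (h a).length = q) (l : List α) (k : ℕ)
    (hk : k ≤ l.length) :
    (applyMorphism h l).take (q * k) = applyMorphism h (l.take k) := by
  have h1 : applyMorphism h l
      = applyMorphism h (l.take k) ++ applyMorphism h (l.drop k) := by
    rw [← am_append, List.take_append_drop]
  rw [h1, List.take_left']
  rw [am_length h q huni, List.length_take, min_eq_left hk]

lemma am_drop (q : ℕ) (huni : ∀ a : α, (h a).length = q) (l : List α) (k : ℕ)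
    (hk : k ≤ l.length) :
    (applyMorphism h l).drop (q * k) = applyMorphism h (l.drop k) := by
  have h1 : applyMorphism h l
      = applyMorphism h (l.take k) ++ applyMorphism h (l.drop k) := by
    rw [← am_append, List.take_append_drop]
  rw [h1, List.drop_left']
  rw [am_length h q huni, List.length_take, min_eq_left hk]

lemma letter_inj (hsync : Synchronizing h) {a c : α} (he : h a = h c) : a = c := by
  have := hsync a a c [] (h a) (by simp [he])
  rcases this with ⟨_, h1⟩ | ⟨_, h1⟩ <;> exact h1

lemma am_inj (q : ℕ) (huni : ∀ a : α, (h a).length = q) (hsync : Synchronizing h) :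
    ∀ u v : List α, u.length = v.length →
      applyMorphism h u = applyMorphism h v → u = v := by
  intro u
  induction u with
  | nil => intro v hl _; exact (List.eq_nil_of_length_eq_zero hl.symm).symm
  | cons a t ih =>
    intro v hl he
    cases v with
    | nil => simp at hl
    | cons b s =>
      rw [am_cons, am_cons] at he
      have hlen : (h a).length = (h b).length := by rw [huni, huni]
      obtain ⟨h1, h2⟩ := List.append_inj he hlen
      have : a = b := letter_inj h hsync h1
      subst this
      simp only [List.length_cons, Nat.add_right_cancel_iff] at hl
      rw [ih s hl h2]

lemma am_flatten_replicate (n : ℕ) (u : List α) :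
    (List.replicate n (applyMorphism h u)).flatten
      = applyMorphism h (List.replicate n u).flatten := by
  induction n with
  | zero => simp [am_nil]
  | succ m ih => simp [List.replicate_succ, am_append, ih]

end SyncAux

open SyncAux in
/-- if `h` is a synchronizing `q`-uniform morphism, `n > 1`, and `zⁿ` is a
prefix of `h(w)` with `|z| ≥ q`, then `q ∣ |z|` and `uⁿ` is a prefix of `w` for some `u`. -/
theorem synchronizing_pullback_power {α β : Type*} (h : α → List β) (q : ℕ) (hq : 0 < q)
    (huni : ∀ a : α, (h a).length = q) (hsync : Synchronizing h)
    (n : ℕ) (hn : 1 < n) (w : List α) (z : List β) (hz : q ≤ z.length)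
    (hpref : (List.replicate n z).flatten <+: applyMorphism h w) :
    q ∣ z.length ∧ ∃ u : List α, (List.replicate n u).flatten <+: w := by
  set p := applyMorphism h w with hp
  set m := z.length with hm
  have hlp : p.length = q * w.length := am_length h q huni w
  have hflen : ((List.replicate n z).flatten).length = n * m := by
    simp [List.length_flatten, Function.comp, hm]
  have hnm : n * m ≤ q * w.length := by
    have := hpref.length_le
    rwa [hflen, hlp] at this
  have h2m : 2 * m ≤ q * w.length :=
    le_trans (Nat.mul_le_mul_right m (by omega)) hnm
  -- z ++ z is a prefix of p
  obtain ⟨n2, rfl⟩ : ∃ n2, n = n2 + 2 := ⟨n - 2, by omega⟩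
  have hzz : z ++ z <+: p := by
    refine List.IsPrefix.trans ⟨(List.replicate n2 z).flatten, ?_⟩ hpref
    simp [List.replicate_succ, List.append_assoc]
  have hzpre : z <+: p := (List.prefix_append z z).trans hzz
  set k := m / q with hk
  set r := m % q with hr
  have hmk : m = q * k + r := (Nat.div_add_mod m q).symm
  have hk1 : 1 ≤ k := (Nat.one_le_div_iff hq).mpr hz
  have hrq : r < q := Nat.mod_lt m hq
  -- Step 1: r = 0
  have hr0 : r = 0 := by
    by_contra hrne
    have hrpos : 0 < r := Nat.pos_of_ne_zero hrne
    have hwk2 : k + 2 ≤ w.length := by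
      by_contra hlt
      push_neg at hlt
      have : q * w.length ≤ q * (k + 1) := Nat.mul_le_mul_left q (by omega)
      nlinarith
    -- decompose drop k w
    have hdlen : 2 ≤ (w.drop k).length := by
      rw [List.length_drop]; omega
    obtain ⟨a, t0, hd0⟩ := List.exists_cons_of_ne_nil
      (List.ne_nil_of_length_pos (by omega) : w.drop k ≠ [])
    have ht0len : 1 ≤ t0.length := by
      have := congrArg List.length hd0
      simp at this; omega
    obtain ⟨b, t, hd1⟩ := List.exists_cons_of_ne_nil
      (List.ne_nil_of_length_pos (by omega) : t0 ≠ [])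
    -- w is nonempty
    obtain ⟨w0, w', hw0⟩ := List.exists_cons_of_ne_nil
      (List.ne_nil_of_length_pos (by nlinarith) : w ≠ [])
    -- h w0 = z.take q
    have hhw0 : h w0 = z.take q := by
      obtain ⟨s, hs⟩ := hzpre
      have heq : z ++ s = h w0 ++ applyMorphism h w' := by
        rw [hs, hp, hw0, am_cons]
      have h2 := congrArg (List.take q) heq
      rw [List.take_append,
        Nat.sub_eq_zero_of_le (show q ≤ z.length from hz), List.take_zero,
        List.append_nil, List.take_left' (huni w0)] at h2
      exact h2.symm
    -- drop m p = z ++ s2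
    obtain ⟨s2, hs2⟩ := hzz
    have hdropm : p.drop m = z ++ s2 := by
      rw [← hs2, List.append_assoc, List.drop_left' rfl]
    -- drop (q*k) p = h a ++ (h b ++ H t)
    have hdropk : p.drop (q * k) = h a ++ (h b ++ applyMorphism h t) := by
      rw [hp, am_drop h q huni w k (by omega), hd0, hd1, am_cons, am_cons]
    have e1 : p.drop m = (h a).drop r ++ (h b ++ applyMorphism h t) := by
      rw [hmk, ← List.drop_drop, hdropk, List.drop_append, huni a,
        Nat.sub_eq_zero_of_le (le_of_lt hrq), List.drop_zero]
    have lhs_eq : ((h a).drop r ++ (h b ++ applyMorphism h t)).take q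
        = (h a).drop r ++ (h b).take r := by
      rw [List.take_append]
      congr 1
      · exact List.take_of_length_le (by rw [List.length_drop, huni]; omega)
      · rw [List.length_drop, huni, show q - (q - r) = r by omega,
          List.take_append,
          Nat.sub_eq_zero_of_le (by rw [huni]; omega),
          List.take_zero, List.append_nil]
    have hkey : h w0 = (h a).drop r ++ (h b).take r := by
      have e2 := congrArg (List.take q) hdropm
      rw [List.take_append,
        Nat.sub_eq_zero_of_le (show q ≤ z.length from hz), List.take_zero,
        List.append_nil, e1, lhs_eq] at e2
      rw [hhw0, ← e2]
    have hsplit : h a ++ h b = (h a).take r ++ h w0 ++ (h b).drop r := by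
      conv_lhs => rw [← List.take_append_drop r (h a), ← List.take_append_drop r (h b)]
      rw [hkey]
      simp only [List.append_assoc]
    rcases hsync a b w0 _ _ hsplit with ⟨h1, _⟩ | ⟨h1, _⟩
    · have := congrArg List.length h1
      simp [huni] at this
      omega
    · have := congrArg List.length h1
      simp [huni] at this
      omega
  refine ⟨Dvd.intro k (by omega), ?_⟩
  -- Step 2: pull back
  have hmqk : m = q * k := by omega
  have hkw : k ≤ w.length := by
    have : q * k ≤ q * w.length := by omega
    exact Nat.le_of_mul_le_mul_left this hq
  set u := w.take k with hu
  have hzu : z = applyMorphism h u := by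
    have := List.prefix_iff_eq_take.mp hzpre
    rw [← hm, hmqk] at this
    rw [this, hp, am_take h q huni w k hkw]
  set N := n2 + 2 with hN
  have hNk : N * k ≤ w.length := by
    have h1 : q * (N * k) ≤ q * w.length := by
      calc q * (N * k) = N * (q * k) := by ring
        _ = N * m := by rw [hmqk]
        _ ≤ q * w.length := hnm
    exact Nat.le_of_mul_le_mul_left h1 hq
  refine ⟨u, ?_⟩
  have hUlen : ((List.replicate N u).flatten).length = N * k := by
    simp [List.length_flatten, hu, List.length_take, min_eq_left hkw]
  have hHU : applyMorphism h ((List.replicate N u).flatten)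
      = applyMorphism h (w.take (N * k)) := by
    have hpre2 : applyMorphism h ((List.replicate N u).flatten) <+: p := by
      rw [← am_flatten_replicate, ← hzu]; exact hpref
    have := List.prefix_iff_eq_take.mp hpre2
    rw [am_length h q huni, hUlen] at this
    rw [this, hp, am_take h q huni w (N * k) hNk]
  have := am_inj h q huni hsync _ _
    (by rw [hUlen, List.length_take, min_eq_left hNk]) hHU
  rw [this]
  exact List.take_prefix _ _
end

section
/- Let $h: \Sigma^* \to \Sigma^*$ be a strongly synchronizing $q$-uniform morphism with fixed point $h^\omega(0)$, and let $n > 1$ be an integer. If $h^\omega(0)$ contains no factor of the form $z^n$ with $|z^n| < 2nq$, then $h^\omega(0)$ contains no $n$-th power at all. -/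
/-- `h` is a strongly synchronizing morphism. -/
def StronglySynchronizing {α β : Type*} (h : α → List β) : Prop :=
  Synchronizing h ∧ ∀ (a b c : α) (x y : List β), h c = x ++ y →
    x <+: h a → y <:+ h b → c = a ∨ c = b

/-- segment `W s, W (s+1), ..., W (s+l-1)` of the infinite word `W`. -/
def NSPPF.wseg {α : Type*} (W : ℕ → α) (s l : ℕ) : List α :=
  (List.range l).map (fun k => W (s + k))

namespace NSPPF

variable {α : Type*} (W : ℕ → α)

@[simp] lemma wseg_length (s l : ℕ) : (wseg W s l).length = l := by simp [wseg]

lemma wseg_getElem? {k l : ℕ} (s : ℕ) (hk : k < l) : (wseg W s l)[k]? = some (W (s + k)) := by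
  simp [wseg, List.getElem?_map, List.getElem?_range hk]

lemma wseg_getElem?_none {k l : ℕ} (s : ℕ) (hk : l ≤ k) : (wseg W s l)[k]? = none := by
  apply List.getElem?_eq_none; simpa using hk

lemma wseg_add (s m r : ℕ) : wseg W s (m + r) = wseg W s m ++ wseg W (s + m) r := by
  simp only [wseg, List.range_add, List.map_append, List.map_map]
  congr 1
  apply List.map_congr_left
  intro k _
  simp [Function.comp, Nat.add_assoc]

lemma wseg_congr {s₁ s₂ l : ℕ} (hc : ∀ k, k < l → W (s₁ + k) = W (s₂ + k)) :
    wseg W s₁ l = wseg W s₂ l := by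
  apply List.ext_getElem?
  intro k
  by_cases hk : k < l
  · rw [wseg_getElem? W _ hk, wseg_getElem? W _ hk, hc k hk]
  · rw [wseg_getElem?_none W _ (by omega), wseg_getElem?_none W _ (by omega)]

lemma flat_rep_length (n : ℕ) (z : List α) :
    ((List.replicate n z).flatten).length = n * z.length := by
  induction n with
  | zero => simp
  | succ n ih => simp [List.replicate_succ, ih, Nat.succ_mul]; ring

lemma flat_rep_getElem? (z : List α) : ∀ n k, k < n * z.length →
    ((List.replicate n z).flatten)[k]? = z[k % z.length]? := by
  intro n
  induction n with
  | zero => intro k hk; omega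
  | succ n ih =>
    intro k hk
    rw [List.replicate_succ, List.flatten_cons]
    by_cases hkz : k < z.length
    · rw [List.getElem?_append_left hkz, Nat.mod_eq_of_lt hkz]
    · have hz : 0 < z.length := by
        rcases Nat.eq_zero_or_pos z.length with h0 | h0
        · rw [h0] at hk; simp at hk
        · exact h0
      have hsm : (n+1) * z.length = n * z.length + z.length := by ring
      rw [List.getElem?_append_right (by omega), ih (k - z.length) (by omega),
        show k % z.length = (k - z.length) % z.length from Nat.mod_eq_sub_mod (by omega)]

variable {h : α → List α} {q : ℕ}

lemma hblock (huni : ∀ a : α, (h a).length = q)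
    (hfix : ∀ m : ℕ, (h (W (m / q)))[m % q]? = some (W m)) (hq0 : 0 < q) (t : ℕ) :
    h (W t) = wseg W (q * t) q := by
  apply List.ext_getElem?
  intro k
  by_cases hk : k < q
  · have e1 : (q*t+k)/q = t := by rw [Nat.mul_add_div hq0, Nat.div_eq_of_lt hk]; omega
    have e2 : (q*t+k) % q = k := by rw [Nat.mul_add_mod, Nat.mod_eq_of_lt hk]
    have hf := hfix (q*t+k)
    rw [e1, e2] at hf
    rw [hf, wseg_getElem? W _ hk]
  · rw [wseg_getElem?_none W _ (by omega), List.getElem?_eq_none (by rw [huni]; omega)]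

lemma sync_step (hsync : Synchronizing h) (huni : ∀ a : α, (h a).length = q)
    (hfix : ∀ m : ℕ, (h (W (m / q)))[m % q]? = some (W m)) (hq0 : 0 < q)
    {i N P t : ℕ}
    (hper : ∀ m, i ≤ m → m + P + 1 ≤ i + N → W m = W (m + P))
    (h1 : i ≤ q * t) (h2 : q * t + q + P ≤ i + N) :
    P % q = 0 ∧ W t = W (t + P / q) := by
  have e1 : q * ((q*t+P)/q) + (q*t+P) % q = q*t + P := Nat.div_add_mod _ _
  have e2 : (q*t+P) % q = P % q := Nat.mul_add_mod ..
  set t' := (q*t+P)/q with ht'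
  set d := P % q with hd
  have hdq : d < q := Nat.mod_lt _ hq0
  have hsplit : q*t' + d = q*t + P := by rw [e2] at e1; exact e1
  have hmid : wseg W (q*t' + d) q = h (W t) := by
    rw [show q*t' + d = q*t + P from hsplit, hblock W huni hfix hq0 t]
    apply wseg_congr
    intro k hk
    have h5 := (hper (q*t+k) (by omega) (by omega)).symm
    rw [show q*t+P+k = q*t+k+P by omega]
    exact h5
  have heq : h (W t') ++ h (W (t'+1)) = (wseg W (q*t') d ++ h (W t)) ++ wseg W (q*t+P+q) (q - d) := by
    rw [hblock W huni hfix hq0 t', hblock W huni hfix hq0 (t'+1)]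
    have e3 : wseg W (q*t') q ++ wseg W (q*(t'+1)) q = wseg W (q*t') (q+q) := by
      rw [wseg_add, show q*t'+q = q*(t'+1) by ring]
    rw [e3, show q + q = d + (q + (q - d)) by omega, wseg_add, wseg_add, hmid,
      show q*t'+d+q = q*t+P+q by omega, List.append_assoc]
  rcases hsync (W t') (W (t'+1)) (W t) _ _ heq with ⟨hr, hac⟩ | ⟨hs, _⟩
  · have hd0 : d = 0 := by have := congrArg List.length hr; simpa using this
    refine ⟨hd0, ?_⟩
    have hP : q * (P/q) = P := Nat.mul_div_cancel' (Nat.dvd_of_mod_eq_zero hd0)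
    have e4 : q*(t+P/q) = q*t + q*(P/q) := by ring
    have e5 : q * t' = q * (t + P/q) := by omega
    have htt : t' = t + P/q := Nat.eq_of_mul_eq_mul_left hq0 e5
    rw [← htt]
    exact hac.symm
  · exfalso
    have := congrArg List.length hs
    simp at this
    omega

lemma factor_of_periodic (n s₀ p' : ℕ) (hp' : 0 < p')
    (hyp : ∀ k, k + p' + 1 ≤ n * p' → W (s₀ + k) = W (s₀ + k + p')) :
    FactorOf ((List.replicate n (wseg W s₀ p')).flatten) W := by
  refine ⟨s₀, ?_⟩
  have hlen : ((List.replicate n (wseg W s₀ p')).flatten).length = n * p' := by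
    rw [flat_rep_length]; simp
  rw [hlen]
  have key : ∀ k, k < n * p' → W (s₀ + k % p') = W (s₀ + k) := by
    intro k
    induction k using Nat.strong_induction_on with
    | _ k ih =>
      intro hk
      by_cases hkp : k < p'
      · rw [Nat.mod_eq_of_lt hkp]
      · rw [Nat.mod_eq_sub_mod (show p' ≤ k by omega), ih (k - p') (by omega) (by omega)]
        have h4 := hyp (k - p') (by omega)
        rw [h4]
        congr 1
        omega
  apply List.ext_getElem?
  intro k
  by_cases hk : k < n * p'
  · rw [flat_rep_getElem? (wseg W s₀ p') n k (by simpa using hk)]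
    simp only [wseg_length]
    rw [wseg_getElem? W _ (Nat.mod_lt _ hp'), key k hk]
    simp [List.getElem?_map, List.getElem?_range hk]
  · have e1 : ((List.replicate n (wseg W s₀ p')).flatten).length ≤ k := by
      rw [flat_rep_length, wseg_length]; omega
    have e2 : ((List.range (n*p')).map fun j => W (s₀+j)).length ≤ k := by
      simp only [List.length_map, List.length_range]; omega
    rw [List.getElem?_eq_none e1, List.getElem?_eq_none e2]

end NSPPF

/-- if the fixed point `W = h^ω(0)` of a strongly synchronizing `q`-uniform
morphism has no `n`-th power factor `zⁿ` with `|zⁿ| < 2nq`, then it has no `n`-th power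
factor at all. -/
theorem no_small_powers_imp_power_free {α : Type*} (h : α → List α) (q : ℕ) (hq : 2 ≤ q)
    (huni : ∀ a : α, (h a).length = q) (hssm : StronglySynchronizing h)
    (W : ℕ → α)
    (hfix : ∀ m : ℕ, (h (W (m / q)))[m % q]? = some (W m))
    (n : ℕ) (hn : 1 < n)
    (hsmall : ∀ z : List α, z ≠ [] → n * z.length < 2 * n * q →
      ¬ FactorOf ((List.replicate n z).flatten) W) :
    ∀ z : List α, z ≠ [] → ¬ FactorOf ((List.replicate n z).flatten) W := by
  have hq0 : 0 < q := by omega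
  suffices H : ∀ p : ℕ, ∀ z : List α, z ≠ [] → z.length ≤ p →
      ¬ FactorOf ((List.replicate n z).flatten) W by
    intro z hz
    exact H z.length z hz le_rfl
  intro p
  induction p with
  | zero =>
    intro z hz hlen
    exact absurd (List.length_eq_zero_iff.mp (Nat.le_zero.mp hlen)) hz
  | succ p ih =>
    intro z hz hlen hfac
    have hP0 : 0 < z.length := List.length_pos_iff.mpr hz
    by_cases hsm : z.length < 2*q
    · refine hsmall z hz ?_ hfac
      have e1 : n * (z.length + 1) ≤ n * (2*q) := Nat.mul_le_mul_left n (by omega)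
      have e2 : n * (z.length + 1) = n * z.length + n := by ring
      have e3 : n * (2*q) = 2*n*q := by ring
      omega
    · push_neg at hsm
      obtain ⟨i, hi⟩ := hfac
      rw [NSPPF.flat_rep_length] at hi
      set P := z.length with hPdef
      have hgetF : ∀ k, k < n*P → ((List.replicate n z).flatten)[k]? = some (W (i+k)) := by
        intro k hk
        rw [hi]
        simp [List.getElem?_map, List.getElem?_range hk]
      have hper : ∀ m, i ≤ m → m + P + 1 ≤ i + n*P → W m = W (m+P) := by
        intro m hm h2
        have g3 := NSPPF.flat_rep_getElem? z n (m-i) (by rw [← hPdef]; omega)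
        have g4 := NSPPF.flat_rep_getElem? z n (m-i+P) (by rw [← hPdef]; omega)
        rw [← hPdef] at g3 g4
        rw [hgetF (m-i) (by omega)] at g3
        rw [hgetF (m-i+P) (by omega)] at g4
        have g5 : (m - i) % P = (m - i + P) % P := (Nat.add_mod_right _ _).symm
        rw [← g5] at g4
        have g7 := Option.some.inj (g3.trans g4.symm)
        rw [show i + (m-i) = m by omega, show i + (m-i+P) = m + P by omega] at g7
        exact g7
      set a := i / q with ha
      set b := i % q with hb
      have hiq : q*a + b = i := Nat.div_add_mod i q
      have hbq : b < q := Nat.mod_lt _ hq0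
      have h2P : 2*P ≤ n*P := Nat.mul_le_mul_right P (by omega)
      have hstep0 := NSPPF.sync_step W hssm.1 huni hfix hq0 hper (t := a+1)
        (by have e : q*(a+1) = q*a + q := by ring
            omega)
        (by have e : q*(a+1) = q*a + q := by ring
            omega)
      have hdvd : P % q = 0 := hstep0.1
      set p' := P / q with hp'
      have hpq : q * p' = P := Nat.mul_div_cancel' (Nat.dvd_of_mod_eq_zero hdvd)
      have hp'2 : 2 ≤ p' := by
        by_contra hcon
        push_neg at hcon
        have : q * p' ≤ q * 1 := Nat.mul_le_mul_left q (by omega)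
        omega
      have hp'P : p' < P := by
        have h1 : 2 * p' ≤ q * p' := Nat.mul_le_mul_right p' hq
        omega
      have chain : ∀ t, i ≤ q*t → q*t + q + P ≤ i + n*P → W t = W (t + p') := by
        intro t c1 c2
        exact (NSPPF.sync_step W hssm.1 huni hfix hq0 hper c1 c2).2
      have hexp : ∀ k : ℕ, q*(a+k) = q*a + q*k := fun k => by ring
      have hnP : q*(n*p') = n*P := by rw [← hpq]; ring
      have hscale : ∀ k : ℕ, k + 1 + p' ≤ n*p' → q*k + q + P ≤ b + n*P := by
        intro k hk
        have e1 := Nat.mul_le_mul_left q hk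
        have e : q*(k+1+p') = q*k + q + q*p' := by ring
        omega
      have hwsegne : ∀ s : ℕ, NSPPF.wseg W s p' ≠ [] := fun s =>
        List.ne_nil_of_length_pos (by rw [NSPPF.wseg_length]; omega)
      have hwseglen : ∀ s : ℕ, (NSPPF.wseg W s p').length ≤ p := fun s => by
        rw [NSPPF.wseg_length]; omega
      rcases Nat.eq_zero_or_pos b with hb0 | hbpos
      · -- aligned case
        refine ih (NSPPF.wseg W a p') (hwsegne a) (hwseglen a) ?_
        apply NSPPF.factor_of_periodic W n a p' (by omega)
        intro k hk
        apply chain (a+k)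
        · rw [hexp k]; omega
        · rw [hexp k]
          have := hscale k (by omega)
          omega
      · -- misaligned case
        set Y := W (a + p') with hY
        have e7 : (n-1)*p' + p' = n*p' := by
          have e : (n-1)+1 = n := by omega
          calc (n-1)*p' + p' = ((n-1)+1)*p' := by ring
            _ = n*p' := by rw [e]
        have hchainY : ∀ j, 1 ≤ j → j ≤ n-1 → W (a + j*p') = Y := by
          intro j
          induction j with
          | zero => intro h1 _; exact absurd h1 (by omega)
          | succ j ihj =>
            intro _ h2
            rcases Nat.eq_zero_or_pos j with hj0 | hj0
            · subst hj0
              rw [show a + 1*p' = a + p' by ring]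
            · have e1 := ihj (by omega) (by omega)
              rw [← e1, show a + (j+1)*p' = (a + j*p') + p' by ring]
              refine (chain (a + j*p') ?_ ?_).symm
              · have e3 : q*(a+j*p') = q*a + q*(j*p') := by ring
                have e4 : q*p' ≤ q*(j*p') := Nat.mul_le_mul_left q (Nat.le_mul_of_pos_left p' hj0)
                omega
              · have e5 : (j+1)*p' = j*p' + p' := by ring
                have e6 : (j+1)*p' ≤ (n-1)*p' := Nat.mul_le_mul_right p' (by omega)
                have e8 := hscale (j*p') (by omega)
                have e3 : q*(a+j*p') = q*a + q*(j*p') := by ring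
                omega
        by_cases hA : W a = Y
        · refine ih (NSPPF.wseg W a p') (hwsegne a) (hwseglen a) ?_
          apply NSPPF.factor_of_periodic W n a p' (by omega)
          intro k hk
          rcases Nat.eq_zero_or_pos k with hk0 | hk0
          · subst hk0
            simp only [Nat.add_zero]
            exact hA.trans hY
          · apply chain (a+k)
            · rw [hexp k]
              have := Nat.le_mul_of_pos_right q hk0
              omega
            · rw [hexp k]
              have := hscale k (by omega)
              omega
        · by_cases hB : W (a + n*p') = Y
          · refine ih (NSPPF.wseg W (a+1) p') (hwsegne (a+1)) (hwseglen (a+1)) ?_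
            apply NSPPF.factor_of_periodic W n (a+1) p' (by omega)
            intro k hk
            by_cases hklast : k + p' + 2 ≤ n*p'
            · apply chain (a+1+k)
              · have e : q*(a+1+k) = q*a + q*k + q := by ring
                omega
              · have e : q*(a+1+k) = q*a + q*k + q := by ring
                have e2 : q*(k+1) = q*k + q := by ring
                have := hscale (k+1) (by omega)
                omega
            · have e1 : a+1+k = a + (n-1)*p' := by omega
              rw [e1, show a + (n-1)*p' + p' = a + n*p' by omega,
                hchainY (n-1) (by omega) le_rfl, hB]
          · -- strong synchronization contradiction
            have hmulti : ∀ j m, i ≤ m → m + j*P + 1 ≤ i + n*P → W m = W (m + j*P) := by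
              intro j
              induction j with
              | zero => intro m _ _; simp
              | succ j ihj =>
                intro m hm h2
                have e1 : (j+1)*P = j*P + P := by ring
                have w1 := ihj m hm (by omega)
                have w2 := hper (m + j*P) (by omega) (by omega)
                rw [w1, w2]
                congr 1
                omega
            have e7P : (n-1)*P + P = n*P := by
              have e : (n-1)+1 = n := by omega
              calc (n-1)*P + P = ((n-1)+1)*P := by ring
                _ = n*P := by rw [e]
            have e8 : q*(a+p') = q*a + P := by rw [← hpq]; ring
            have e9 : q*(a+n*p') = q*a + n*P := by rw [← hnP]; ring
            have prefix_eq : ∀ k, k < b → W (q*(a+p') + k) = W (q*(a + n*p') + k) := by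
              intro k hk
              have hm := hmulti (n-1) (q*(a+p') + k) (by omega) (by omega)
              rw [hm]
              congr 1
              omega
            have suffix_eq : ∀ k, k < q - b → W (q*a + b + k) = W (q*(a+p') + b + k) := by
              intro k hk
              have hm := hper (q*a + b + k) (by omega) (by omega)
              rw [hm]
              congr 1
              omega
            have hYb : h Y = NSPPF.wseg W (q*(a+p')) b ++ NSPPF.wseg W (q*(a+p') + b) (q - b) := by
              rw [hY, NSPPF.hblock W huni hfix hq0 (a+p')]
              have e10 := NSPPF.wseg_add W (q*(a+p')) b (q-b)
              rw [show b + (q-b) = q from by omega] at e10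
              exact e10
            have hxpre : NSPPF.wseg W (q*(a+p')) b <+: h (W (a + n*p')) := by
              rw [NSPPF.hblock W huni hfix hq0 (a+n*p'), NSPPF.wseg_congr W prefix_eq]
              refine ⟨NSPPF.wseg W (q*(a+n*p') + b) (q - b), ?_⟩
              have e10 := NSPPF.wseg_add W (q*(a+n*p')) b (q-b)
              rw [show b + (q-b) = q from by omega] at e10
              exact e10.symm
            have hysuf : NSPPF.wseg W (q*(a+p') + b) (q - b) <:+ h (W a) := by
              rw [NSPPF.hblock W huni hfix hq0 a]
              have e11 : NSPPF.wseg W (q*(a+p') + b) (q-b) = NSPPF.wseg W (q*a + b) (q-b) := by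
                apply NSPPF.wseg_congr
                intro k hk
                exact (suffix_eq k hk).symm
              rw [e11]
              refine ⟨NSPPF.wseg W (q*a) b, ?_⟩
              have e10 := NSPPF.wseg_add W (q*a) b (q-b)
              rw [show b + (q-b) = q from by omega] at e10
              exact e10.symm
            rcases hssm.2 (W (a + n*p')) (W a) Y _ _ hYb hxpre hysuf with hc | hc
            · exact hB hc.symm
            · exact hA hc.symm
end

section
/- The fixed point $\psi^\omega(0)$ of the morphism $\psi$ over $\Sigma_6 = \{0,1,2,3,4,5\}$ defined by $\psi(0)=0435$, $\psi(1)=2341$, $\psi(2)=3542$, $\psi(3)=3540$, $\psi(4)=4134$, $\psi(5)=4105$ is squarefree: it contains no factor of the form $zz$ with $z$ nonempty. -/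
/-- The 4-uniform morphism ψ on Σ₆. -/
def psi : Fin 6 → List (Fin 6) :=
  ![[0, 4, 3, 5], [2, 3, 4, 1], [3, 5, 4, 2], [3, 5, 4, 0], [4, 1, 3, 4], [4, 1, 0, 5]]

/-- Iterates of ψ starting from the letter 0. -/
def psiIter : ℕ → List (Fin 6)
  | 0 => [0]
  | n + 1 => ((psiIter n).map psi).flatten

/-- The fixed point `ψ^ω(0)` as an infinite word (the `n`-th letter is the `n`-th letter
of any sufficiently long iterate). -/
def psiOmega : ℕ → Fin 6 := fun n => (psiIter (n + 1)).getD n 0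

/-! ### Auxiliary definitions -/

abbrev G := List (Fin 6)

def Psi (w : G) : G := (w.map psi).flatten

def gd (w : G) (i : ℕ) : Fin 6 := w.getD i 0

def Sq (w : G) (p ℓ : ℕ) : Prop :=
  1 ≤ ℓ ∧ p + 2*ℓ ≤ w.length ∧ ∀ t, t < ℓ → gd w (p+t) = gd w (p+ℓ+t)

def SF (w : G) : Prop := ∀ p ℓ, ¬ Sq w p ℓ

def pOK (a b : Fin 6) : Bool :=
  decide ((a,b) ∈ ([(0,4),(0,5),(1,0),(1,3),(2,3),(3,4),(3,5),(4,0),(4,1),(4,2),(4,3),(5,4)] :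
    List (Fin 6 × Fin 6)))

def POK (w : G) : Prop := ∀ j, j+1 < w.length → pOK (gd w j) (gd w (j+1)) = true

def winEq (v : G) (p ℓ n : ℕ) : Bool := (List.range n).all fun s => gd v (p+s) == gd v (p+ℓ+s)

def hasSq (v : G) : Bool :=
  (List.range (v.length+1)).any fun ℓ => (List.range (v.length+1)).any fun p =>
    decide (1 ≤ ℓ) && decide (p + 2*ℓ ≤ v.length) && winEq v p ℓ ℓ

def pairsOK (v : G) : Bool :=
  (List.range v.length).all fun j => !decide (j+1 < v.length) || pOK (gd v j) (gd v (j+1))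

def noWin (v : G) (n : ℕ) : Bool :=
  (List.range 4).all fun p => (List.range 7).all fun ℓ =>
    !(decide (1 ≤ ℓ) && decide (p + 2*ℓ ≤ n)) || !(winEq v p ℓ ℓ)

/-! ### Finite checks -/

lemma lemA : ∀ a b c : Fin 6, ∀ r : Fin 4, 0 < r.val →
    ¬ (∀ s : Fin 4, gd (psi a) s.val = gd (psi b ++ psi c) (r.val + s.val)) := by decide

lemma lemB : ∀ a b : Fin 6, ∀ r : Fin 3,
    (∀ s : Fin 4, r.val ≤ s.val → gd (psi a) s.val = gd (psi b) s.val) → a = b := by decide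

lemma lemC : ∀ a b c : Fin 6, gd (psi a) 3 = gd (psi b) 3 →
    (∀ s : Fin 3, gd (psi b) s.val = gd (psi c) s.val) → b = a ∨ b = c := by decide

lemma lemE : ∀ a : Fin 6, ∀ s : Fin 3, pOK (gd (psi a) s.val) (gd (psi a) (s.val+1)) = true := by
  decide

lemma lemF : ∀ a b : Fin 6, pOK a b = true → pOK (gd (psi a) 3) (gd (psi b) 0) = true := by decide

lemma lemD1 : ∀ a : Fin 6, pairsOK [a] = true → hasSq [a] = false →
    noWin (Psi [a]) 4 = true := by decide

lemma lemD2 : ∀ a b : Fin 6, pairsOK [a,b] = true → hasSq [a,b] = false →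
    noWin (Psi [a,b]) 8 = true := by decide

set_option maxHeartbeats 1000000 in
lemma lemD3 : ∀ a b c : Fin 6, pairsOK [a,b,c] = true → hasSq [a,b,c] = false →
    noWin (Psi [a,b,c]) 12 = true := by decide

set_option maxHeartbeats 8000000 in
lemma lemD4 : ∀ a b c d : Fin 6, pairsOK [a,b,c,d] = true → hasSq [a,b,c,d] = false →
    noWin (Psi [a,b,c,d]) 16 = true := by decide

/-! ### Basic lemmas about `gd` and `Psi` -/

lemma len_psi (a : Fin 6) : (psi a).length = 4 := by fin_cases a <;> rfl

lemma gd_lt {w : G} {i : ℕ} (h : i < w.length) : gd w i = w[i] := List.getD_eq_getElem w 0 h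

lemma gd_ge {w : G} {i : ℕ} (h : w.length ≤ i) : gd w i = 0 := List.getD_eq_default w 0 h

lemma gd_append_lt (v v' : G) {i : ℕ} (h : i < v.length) : gd (v ++ v') i = gd v i :=
  List.getD_append v v' 0 i h

lemma gd_append_ge (v v' : G) {i : ℕ} (h : v.length ≤ i) :
    gd (v ++ v') i = gd v' (i - v.length) :=
  List.getD_append_right v v' 0 i h

lemma Psi_cons (a : Fin 6) (w : G) : Psi (a :: w) = psi a ++ Psi w := by simp [Psi]

lemma Psi_append (w v : G) : Psi (w ++ v) = Psi w ++ Psi v := by simp [Psi]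

lemma len_Psi (w : G) : (Psi w).length = 4 * w.length := by
  induction w with
  | nil => rfl
  | cons a w ih =>
    rw [Psi_cons, List.length_append, len_psi, ih, List.length_cons]
    ring

lemma gd_Psi : ∀ (w : G) (i : ℕ), i < 4 * w.length →
    gd (Psi w) i = gd (psi (gd w (i/4))) (i % 4) := by
  intro w
  induction w with
  | nil => intro i h; simp at h
  | cons a w ih =>
    intro i h
    rw [Psi_cons]
    rcases Nat.lt_or_ge i 4 with h4 | h4
    · rw [gd_append_lt _ _ (by rw [len_psi]; exact h4)]
      have h1 : i / 4 = 0 := by omega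
      have h2 : i % 4 = i := by omega
      rw [h1, h2]; rfl
    · obtain ⟨j, rfl⟩ : ∃ j, i = 4 + j := ⟨i - 4, by omega⟩
      rw [gd_append_ge _ _ (by rw [len_psi]; omega), len_psi]
      have h0 : 4 + j - 4 = j := by omega
      have hj : j < 4 * w.length := by
        rw [List.length_cons] at h; omega
      rw [h0, ih j hj]
      have h1 : (4+j)/4 = j/4 + 1 := by omega
      have h2 : (4+j)%4 = j%4 := by omega
      rw [h1, h2]
      rfl

lemma gd_drop (v : G) (q i : ℕ) : gd (v.drop q) i = gd v (q+i) := by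
  rcases Nat.lt_or_ge (q+i) v.length with h | h
  · rw [gd_lt (by simp; omega), gd_lt h, List.getElem_drop]
  · rw [gd_ge (by simp; omega), gd_ge h]

lemma gd_take (v : G) {k i : ℕ} (h : i < k) : gd (v.take k) i = gd v i := by
  rcases Nat.lt_or_ge i v.length with h' | h'
  · rw [gd_lt (by simp; omega), gd_lt h', List.getElem_take]
  · rw [gd_ge (by simp; omega), gd_ge h']

/-! ### Relating the boolean checks with the predicates -/

lemma winEq_iff (v : G) (p ℓ n : ℕ) :
    winEq v p ℓ n = true ↔ ∀ s, s < n → gd v (p+s) = gd v (p+ℓ+s) := by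
  simp [winEq, List.all_eq_true, List.mem_range]

lemma hasSq_eq_false {v : G} (h : SF v) : hasSq v = false := by
  rw [Bool.eq_false_iff]
  intro htrue
  simp only [hasSq, List.any_eq_true, List.mem_range, Bool.and_eq_true, decide_eq_true_eq] at htrue
  obtain ⟨ℓ, -, p, -, ⟨h1, h2⟩, h3⟩ := htrue
  exact h p ℓ ⟨h1, h2, (winEq_iff v p ℓ ℓ).1 h3⟩

lemma pairsOK_eq_true {v : G} (h : POK v) : pairsOK v = true := by
  simp only [pairsOK, List.all_eq_true, List.mem_range, Bool.or_eq_true, Bool.not_eq_true',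
    decide_eq_false_iff_not]
  intro j _
  by_cases hj : j + 1 < v.length
  · exact Or.inr (h j hj)
  · exact Or.inl hj

lemma noWin_spec {v : G} {n : ℕ} (h : noWin v n = true) {p ℓ : ℕ}
    (hp : p < 4) (h1 : 1 ≤ ℓ) (h6 : ℓ < 7) (hn : p + 2*ℓ ≤ n)
    (hall : ∀ s, s < ℓ → gd v (p+s) = gd v (p+ℓ+s)) : False := by
  simp only [noWin, List.all_eq_true, List.mem_range, Bool.or_eq_true, Bool.not_eq_true',
    Bool.and_eq_false_iff, decide_eq_false_iff_not] at h
  rcases h p hp ℓ h6 with h' | h'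
  · rcases h' with h' | h' <;> omega
  · rw [(winEq_iff v p ℓ ℓ).2 hall] at h'
    simp at h'

/-! ### Squarefreeness and pairs are inherited by sublists -/

lemma SF_sub {w : G} (h : SF w) (q k : ℕ) : SF (List.take k (w.drop q)) := by
  intro p ℓ ⟨h1, h2, h3⟩
  have hlen : (List.take k (w.drop q)).length = min k (w.length - q) := by simp
  refine h (q+p) ℓ ⟨h1, by omega, ?_⟩
  intro t ht
  have e1 := h3 t ht
  rw [gd_take _ (by omega), gd_take _ (by omega), gd_drop, gd_drop] at e1
  have a1 : q + (p + t) = q + p + t := by omega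
  have a2 : q + (p + ℓ + t) = q + p + ℓ + t := by omega
  rw [a1, a2] at e1
  exact e1

lemma POK_sub {w : G} (h : POK w) (q k : ℕ) : POK (List.take k (w.drop q)) := by
  intro j hj
  have hlen : (List.take k (w.drop q)).length = min k (w.length - q) := by simp
  rw [gd_take _ (by omega), gd_take _ (by omega), gd_drop, gd_drop]
  have a1 : q + (j+1) = (q+j) + 1 := by omega
  rw [a1]
  exact h (q+j) (by omega)

lemma lemD_any : ∀ u : G, 1 ≤ u.length → u.length ≤ 4 → pairsOK u = true → hasSq u = false →
    noWin (Psi u) (4*u.length) = true := by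
  rintro (_ | ⟨a, _ | ⟨b, _ | ⟨c, _ | ⟨d, rest⟩⟩⟩⟩) h1 h4 hp hs
  · simp at h1
  · exact lemD1 a hp hs
  · exact lemD2 a b hp hs
  · exact lemD3 a b c hp hs
  · cases rest with
    | nil => exact lemD4 a b c d hp hs
    | cons e rest => simp at h4; omega

/-! ### The key step: `Psi` preserves the invariant -/

lemma keyPOK {w : G} (h : POK w) : POK (Psi w) := by
  intro j hj
  rw [len_Psi] at hj
  have hj4 : j < 4 * w.length := by omega
  rcases Nat.lt_or_ge (j % 4) 3 with hs | hs
  · have e1 : (j+1)/4 = j/4 := by omega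
    have e2 : (j+1)%4 = j%4 + 1 := by omega
    rw [gd_Psi w j hj4, gd_Psi w (j+1) (by omega), e1, e2]
    exact lemE (gd w (j/4)) ⟨j % 4, hs⟩
  · have hs3 : j % 4 = 3 := by omega
    have e1 : (j+1)/4 = j/4 + 1 := by omega
    have e2 : (j+1)%4 = 0 := by omega
    rw [gd_Psi w j hj4, gd_Psi w (j+1) (by omega), e1, e2, hs3]
    have hb : j/4 + 1 < w.length := by omega
    have := h (j/4) hb
    have hcons : gd w (j/4 + 1) = gd w (j/4 + 1) := rfl
    exact lemF (gd w (j/4)) (gd w (j/4 + 1)) this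

lemma keySF {w : G} (hsf : SF w) (hpk : POK w) : SF (Psi w) := by
  rintro p ℓ ⟨hℓ, hbound, hsq⟩
  rw [len_Psi] at hbound
  -- decompose p
  obtain ⟨q, r, hp, hr⟩ : ∃ q r, p = 4*q + r ∧ r < 4 := ⟨p/4, p%4, by omega, by omega⟩
  rcases Nat.lt_or_ge ℓ 7 with h6 | h7
  · -- short squares: reduce to a finite check on at most 4 letters of w
    set k := (r + 2*ℓ + 3)/4 with hk
    have hk1 : 1 ≤ k := by omega
    have hk4 : k ≤ 4 := by omega
    have hkw : k ≤ w.length - q := by omega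
    have hrk : r + 2*ℓ ≤ 4*k := by omega
    set u := List.take k (w.drop q) with hu
    have hul : u.length = k := by
      rw [hu]; simp; omega
    -- transfer the window into `Psi u`
    have htrans : ∀ x, x < r + 2*ℓ → gd (Psi u) x = gd (Psi w) (4*q + x) := by
      intro x hx
      have hx4 : x < 4 * u.length := by omega
      have hxw : 4*q + x < 4 * w.length := by omega
      rw [gd_Psi u x hx4, gd_Psi w (4*q+x) hxw]
      have e1 : (4*q+x)/4 = q + x/4 := by omega
      have e2 : (4*q+x)%4 = x%4 := by omega
      rw [e1, e2, hu, gd_take _ (by omega), gd_drop]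
    have hwin : ∀ s, s < ℓ → gd (Psi u) (r+s) = gd (Psi u) (r+ℓ+s) := by
      intro s hs
      have e1 := htrans (r+s) (by omega)
      have e2 := htrans (r+ℓ+s) (by omega)
      have e3 := hsq s hs
      have a1 : 4*q + (r+s) = p + s := by omega
      have a2 : 4*q + (r+ℓ+s) = p + ℓ + s := by omega
      rw [e1, e2, a1, a2]
      exact e3
    have hnw := lemD_any u (by omega) (by omega)
      (pairsOK_eq_true (POK_sub hpk q k)) (hasSq_eq_false (SF_sub hsf q k))
    exact noWin_spec hnw hr hℓ h6 (by omega) hwin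
  · -- long squares: first show 4 ∣ ℓ using synchronization
    have hdvd : ℓ % 4 = 0 := by
      by_contra hne
      obtain ⟨j, hj1, hj2⟩ : ∃ j, p ≤ 4*j ∧ 4*j + 4 ≤ p + ℓ := ⟨(p+3)/4, by omega, by omega⟩
      set k1 := (4*j+ℓ)/4 with hk1
      set r' := (4*j+ℓ)%4 with hr'
      have hr'0 : 0 < r' := by omega
      have hr'4 : r' < 4 := by omega
      apply lemA (gd w j) (gd w k1) (gd w (k1+1)) ⟨r', hr'4⟩ hr'0
      intro s
      have hs4 : s.val < 4 := s.isLt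
      have hmk : ((⟨r', hr'4⟩ : Fin 4) : ℕ) = r' := rfl
      rw [hmk]
      -- left side
      have l1 : gd (psi (gd w j)) s.val = gd (Psi w) (4*j + s.val) := by
        rw [gd_Psi w (4*j+s.val) (by omega)]
        have e1 : (4*j+s.val)/4 = j := by omega
        have e2 : (4*j+s.val)%4 = s.val := by omega
        rw [e1, e2]
      have l2 : gd (Psi w) (4*j + s.val) = gd (Psi w) (4*j + ℓ + s.val) := by
        have := hsq (4*j + s.val - p) (by omega)
        have a1 : p + (4*j + s.val - p) = 4*j + s.val := by omega
        have a2 : p + ℓ + (4*j + s.val - p) = 4*j + ℓ + s.val := by omega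
        rw [a1, a2] at this
        exact this
      have hkr : 4*j + ℓ = 4*k1 + r' := by omega
      have l3 : gd (Psi w) (4*j + ℓ + s.val) = gd (psi (gd w (k1 + (r'+s.val)/4))) ((r'+s.val)%4) := by
        rw [gd_Psi w (4*j+ℓ+s.val) (by omega)]
        have e1 : (4*j+ℓ+s.val)/4 = k1 + (r'+s.val)/4 := by omega
        have e2 : (4*j+ℓ+s.val)%4 = (r'+s.val)%4 := by omega
        rw [e1, e2]
      rw [l1, l2, l3]
      rcases Nat.lt_or_ge (r' + s.val) 4 with hlt | hge
      · have e1 : (r'+s.val)/4 = 0 := by omega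
        have e2 : (r'+s.val)%4 = r'+s.val := by omega
        rw [e1, e2, gd_append_lt _ _ (by rw [len_psi]; omega)]
        simp
      · have e1 : (r'+s.val)/4 = 1 := by omega
        have e2 : (r'+s.val)%4 = r'+s.val - 4 := by omega
        rw [e1, e2, gd_append_ge _ _ (by rw [len_psi]; omega), len_psi]
    obtain ⟨m, rfl⟩ : ∃ m, ℓ = 4*m := ⟨ℓ/4, by omega⟩
    have hm2 : 2 ≤ m := by omega
    -- aligned chunk equalities
    have chunk : ∀ j', p ≤ 4*(q+j') → 4*(q+j') + 4 ≤ p + 4*m →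
        gd w (q+j') = gd w (q+m+j') := by
      intro j' hc1 hc2
      apply lemB (gd w (q+j')) (gd w (q+m+j')) ⟨0, by omega⟩
      intro s _
      have hs4 : s.val < 4 := s.isLt
      have e1 : gd (psi (gd w (q+j'))) s.val = gd (Psi w) (4*(q+j') + s.val) := by
        rw [gd_Psi w _ (by omega)]
        have a1 : (4*(q+j')+s.val)/4 = q+j' := by omega
        have a2 : (4*(q+j')+s.val)%4 = s.val := by omega
        rw [a1, a2]
      have e2 : gd (Psi w) (4*(q+j') + s.val) = gd (Psi w) (4*(q+m+j') + s.val) := by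
        have := hsq (4*(q+j') + s.val - p) (by omega)
        have a1 : p + (4*(q+j') + s.val - p) = 4*(q+j') + s.val := by omega
        have a2 : p + 4*m + (4*(q+j') + s.val - p) = 4*(q+m+j') + s.val := by omega
        rw [a1, a2] at this
        exact this
      have e3 : gd (Psi w) (4*(q+m+j') + s.val) = gd (psi (gd w (q+m+j'))) s.val := by
        rw [gd_Psi w _ (by omega)]
        have a1 : (4*(q+m+j')+s.val)/4 = q+m+j' := by omega
        have a2 : (4*(q+m+j')+s.val)%4 = s.val := by omega
        rw [a1, a2]
      rw [e1, e2, e3]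
    -- boundary equalities (suffix part)
    have bsuf : ∀ s, r ≤ s → s < 4 → gd (psi (gd w q)) s = gd (psi (gd w (q+m))) s := by
      intro s hrs hs4
      have e1 : gd (psi (gd w q)) s = gd (Psi w) (4*q + s) := by
        rw [gd_Psi w _ (by omega)]
        have a1 : (4*q+s)/4 = q := by omega
        have a2 : (4*q+s)%4 = s := by omega
        rw [a1, a2]
      have e2 : gd (Psi w) (4*q + s) = gd (Psi w) (4*(q+m) + s) := by
        have := hsq (s - r) (by omega)
        have a1 : p + (s - r) = 4*q + s := by omega
        have a2 : p + 4*m + (s - r) = 4*(q+m) + s := by omega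
        rw [a1, a2] at this
        exact this
      have e3 : gd (Psi w) (4*(q+m) + s) = gd (psi (gd w (q+m))) s := by
        rw [gd_Psi w _ (by omega)]
        have a1 : (4*(q+m)+s)/4 = q+m := by omega
        have a2 : (4*(q+m)+s)%4 = s := by omega
        rw [a1, a2]
      rw [e1, e2, e3]
    rcases Nat.lt_or_ge r 3 with hr2 | hr3
    · -- r ≤ 2 : the first letter matches as well, square at q
      have h0 : gd w q = gd w (q+m) :=
        lemB _ _ ⟨r, by omega⟩ (fun s hs => bsuf s.val hs s.isLt)
      apply hsf q m
      refine ⟨by omega, by omega, ?_⟩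
      intro t ht
      rcases Nat.eq_zero_or_pos t with rfl | htpos
      · simpa using h0
      · exact chunk t (by omega) (by omega)
    · -- r = 3
      have hr3' : r = 3 := by omega
      have hlast : gd (psi (gd w q)) 3 = gd (psi (gd w (q+m))) 3 := bsuf 3 (by omega) (by omega)
      have hpre : ∀ s : Fin 3, gd (psi (gd w (q+m))) s.val = gd (psi (gd w (q+2*m))) s.val := by
        intro s
        have hs3 : s.val < 3 := s.isLt
        have e1 : gd (psi (gd w (q+m))) s.val = gd (Psi w) (4*(q+m) + s.val) := by
          rw [gd_Psi w _ (by omega)]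
          have a1 : (4*(q+m)+s.val)/4 = q+m := by omega
          have a2 : (4*(q+m)+s.val)%4 = s.val := by omega
          rw [a1, a2]
        have e2 : gd (Psi w) (4*(q+m) + s.val) = gd (Psi w) (4*(q+2*m) + s.val) := by
          have := hsq (4*m + s.val - 3) (by omega)
          have a1 : p + (4*m + s.val - 3) = 4*(q+m) + s.val := by omega
          have a2 : p + 4*m + (4*m + s.val - 3) = 4*(q+2*m) + s.val := by omega
          rw [a1, a2] at this
          exact this
        have e3 : gd (Psi w) (4*(q+2*m) + s.val) = gd (psi (gd w (q+2*m))) s.val := by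
          rw [gd_Psi w _ (by omega)]
          have a1 : (4*(q+2*m)+s.val)/4 = q+2*m := by omega
          have a2 : (4*(q+2*m)+s.val)%4 = s.val := by omega
          rw [a1, a2]
        rw [e1, e2, e3]
      rcases lemC (gd w q) (gd w (q+m)) (gd w (q+2*m)) hlast hpre with hba | hbc
      · -- square at q
        apply hsf q m
        refine ⟨by omega, by omega, ?_⟩
        intro t ht
        rcases Nat.eq_zero_or_pos t with rfl | htpos
        · simpa using hba.symm
        · exact chunk t (by omega) (by omega)
      · -- square at q+1
        apply hsf (q+1) m
        refine ⟨by omega, by omega, ?_⟩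
        intro t ht
        rcases Nat.lt_or_ge t (m-1) with htlt | htge
        · have := chunk (t+1) (by omega) (by omega)
          have a1 : q + (t+1) = q + 1 + t := by omega
          have a2 : q + m + (t+1) = q + 1 + m + t := by omega
          rw [a1, a2] at this
          exact this
        · have hte : t = m - 1 := by omega
          have a1 : q + 1 + t = q + m := by omega
          have a2 : q + 1 + m + t = q + 2*m := by omega
          rw [a1, a2]
          exact hbc
/-! ### The iterates are squarefree -/

lemma psiIter_succ (n : ℕ) : psiIter (n+1) = Psi (psiIter n) := rfl

lemma iter_inv : ∀ n, SF (psiIter n) ∧ POK (psiIter n) := by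
  intro n
  induction n with
  | zero =>
    constructor
    · rintro p ℓ ⟨h1, h2, -⟩
      simp [psiIter] at h2
      omega
    · intro j hj
      simp [psiIter] at hj
  | succ n ih =>
    rw [psiIter_succ]
    exact ⟨keySF ih.1 ih.2, keyPOK ih.2⟩

lemma len_iter (n : ℕ) : (psiIter n).length = 4 ^ n := by
  induction n with
  | zero => rfl
  | succ n ih => rw [psiIter_succ, len_Psi, ih, pow_succ]; ring

lemma iter_prefix_succ (n : ℕ) : psiIter n <+: psiIter (n+1) := by
  induction n with
  | zero => exact ⟨[4,3,5], rfl⟩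
  | succ n ih =>
    obtain ⟨t, ht⟩ := ih
    rw [psiIter_succ, psiIter_succ, ← ht, Psi_append]
    exact ⟨Psi t, rfl⟩

lemma iter_prefix {m n : ℕ} (h : m ≤ n) : psiIter m <+: psiIter n := by
  induction n with
  | zero => rw [Nat.le_zero.1 h]
  | succ n ih =>
    rcases Nat.lt_or_ge m (n+1) with h' | h'
    · exact (ih (by omega)).trans (iter_prefix_succ n)
    · have : m = n+1 := by omega
      rw [this]

lemma gd_iter_agree {m n j : ℕ} (hmn : m ≤ n) (hj : j < 4 ^ m) :
    gd (psiIter m) j = gd (psiIter n) j := by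
  obtain ⟨t, ht⟩ := iter_prefix hmn
  rw [← ht, gd_append_lt _ _ (by rw [len_iter]; exact hj)]

lemma psiOmega_eq {n j : ℕ} (hj : j < 4 ^ n) : psiOmega j = gd (psiIter n) j := by
  have h1 : psiOmega j = gd (psiIter (j+1)) j := rfl
  rcases Nat.le_total (j+1) n with h | h
  · rw [h1, gd_iter_agree h (by calc j < 4^j := Nat.lt_pow_self (by norm_num : 1 < 4)
                                    _ ≤ 4^(j+1) := Nat.pow_le_pow_right (by norm_num) (by omega))]
  · rw [h1, ← gd_iter_agree h hj]

/-! ### Main theorem -/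

/-- the fixed point `ψ^ω(0)` is squarefree. -/
theorem psiOmega_squarefree :
    ∀ z : List (Fin 6), z ≠ [] → ¬ FactorOf (z ++ z) psiOmega := by
  rintro z hz ⟨i, hfac⟩
  set ℓ := z.length with hℓdef
  have hℓ : 1 ≤ ℓ := by
    rcases z with _ | ⟨a, t⟩
    · exact absurd rfl hz
    · simp [hℓdef]
  have hlen2 : (z ++ z).length = 2*ℓ := by simp [hℓdef]; omega
  have hgd : ∀ t, t < 2*ℓ → gd (z ++ z) t = psiOmega (i + t) := by
    intro t ht
    have hlt : t < ((List.range (z++z).length).map (fun k => psiOmega (i + k))).length := by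
      simp [hlen2]; omega
    rw [gd, hfac, List.getD_eq_getElem _ _ hlt]
    simp
  have hper : ∀ t, t < ℓ → psiOmega (i + t) = psiOmega (i + ℓ + t) := by
    intro t ht
    have e1 := hgd t (by omega)
    have e2 := hgd (ℓ + t) (by omega)
    rw [gd_append_lt _ _ (by omega)] at e1
    rw [gd_append_ge _ _ (by omega)] at e2
    have a1 : ℓ + t - z.length = t := by omega
    rw [a1] at e2
    have a2 : i + (ℓ + t) = i + ℓ + t := by omega
    rw [a2] at e2
    rw [← e1, ← e2]
  set N := i + 2*ℓ with hN
  have hNlt : i + 2*ℓ ≤ 4 ^ N := by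
    have : N < 4 ^ N := Nat.lt_pow_self (by norm_num : 1 < 4)
    omega
  apply (iter_inv N).1 i ℓ
  refine ⟨hℓ, by rw [len_iter]; omega, ?_⟩
  intro t ht
  have e1 : gd (psiIter N) (i+t) = psiOmega (i+t) := (psiOmega_eq (by omega)).symm
  have e2 : gd (psiIter N) (i+ℓ+t) = psiOmega (i+ℓ+t) := (psiOmega_eq (by omega)).symm
  rw [e1, e2]
  exact hper t ht
end

section
/- The morphism $\psi$ on $\Sigma_6 = \{0,1,2,3,4,5\}$ defined by $\psi(0)=0435$, $\psi(1)=2341$, $\psi(2)=3542$, $\psi(3)=3540$, $\psi(4)=4134$, $\psi(5)=4105$ is strongly synchronizing: it is synchronizing, and for all letters $a,b,c \in \Sigma_6$, if $\psi(c) = xy$ where $x$ is a prefix of $\psi(a)$ and $y$ is a suffix of $\psi(b)$, then $c = a$ or $c = b$. -/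
lemma psi_len (x : Fin 6) : (psi x).length = 4 := by fin_cases x <;> rfl

lemma psi_key1 : ∀ (a b c : Fin 6) (k : Fin 5),
    psi a ++ psi b =
      (psi a ++ psi b).take k.val ++ psi c ++ (psi a ++ psi b).drop (k.val + 4) →
    (k.val = 0 ∧ a = c) ∨ (k.val = 4 ∧ b = c) := by decide

lemma psi_key2 : ∀ (a b c : Fin 6) (k : Fin 5),
    (psi c).take k.val <+: psi a → (psi c).drop k.val <:+ psi b →
    c = a ∨ c = b := by decide

/-- ψ is strongly synchronizing. -/
theorem psi_strongly_synchronizing : StronglySynchronizing psi := by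
  constructor
  · intro a b c r s h
    have hlen : r.length + s.length = 4 := by
      have := congrArg List.length h
      simp [psi_len] at this
      omega
    have hk : r.length ≤ 4 := by omega
    have hr : r = (psi a ++ psi b).take r.length := by
      rw [h, List.append_assoc, List.take_left]
    have hs : s = (psi a ++ psi b).drop (r.length + 4) := by
      rw [h, show r.length + 4 = (r ++ psi c).length by simp [psi_len], List.drop_left]
    have := psi_key1 a b c ⟨r.length, by omega⟩ (by
      simp only [Fin.val_mk]
      rw [← hr, ← hs]
      exact h)
    rcases this with ⟨h0, hac⟩ | ⟨h4, hbc⟩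
    · exact Or.inl ⟨List.eq_nil_of_length_eq_zero h0, hac⟩
    · refine Or.inr ⟨List.eq_nil_of_length_eq_zero ?_, hbc⟩
      simp only [Fin.val_mk] at h4
      omega
  · intro a b c x y hxy hx hy
    have hlen : 4 = x.length + y.length := by
      have := congrArg List.length hxy
      simpa [psi_len] using this
    have hxv : x = (psi c).take x.length := by rw [hxy, List.take_left]
    have hyv : y = (psi c).drop x.length := by rw [hxy, List.drop_left]
    exact psi_key2 a b c ⟨x.length, by omega⟩ (hxv ▸ hx) (hyv ▸ hy)
end

section
/- The $15$-uniform morphism $\mu$ on $\Sigma_6$ defined by $\mu(0)=012102120102012$, $\mu(1)=201020121012021$, $\mu(2)=012102010212010$, $\mu(3)=201210212021012$, $\mu(4)=102120121012021$, $\mu(5)=102010212021012$ is strongly synchronizing. -/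
/-- The 15-uniform morphism μ from Σ₆ to Σ₃. -/
def mu : Fin 6 → List (Fin 3) :=
  ![[0,1,2,1,0,2,1,2,0,1,0,2,0,1,2],
    [2,0,1,0,2,0,1,2,1,0,1,2,0,2,1],
    [0,1,2,1,0,2,0,1,0,2,1,2,0,1,0],
    [2,0,1,2,1,0,2,1,2,0,2,1,0,1,2],
    [1,0,2,1,2,0,1,2,1,0,1,2,0,2,1],
    [1,0,2,0,1,0,2,1,2,0,2,1,0,1,2]]

lemma mu_len (a : Fin 6) : (mu a).length = 15 := by
  fin_cases a <;> rfl

lemma sync_check : ∀ (a b c : Fin 6) (k : Fin 16),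
    ((mu a ++ mu b).drop k.val).take 15 = mu c →
    (k.val = 0 ∧ a = c) ∨ (k.val = 15 ∧ b = c) := by decide

lemma strong_check : ∀ (a b c : Fin 6) (k : Fin 16),
    mu c = (mu a).take k.val ++ (mu b).drop k.val → c = a ∨ c = b := by decide

/-- μ is strongly synchronizing. -/
theorem mu_strongly_synchronizing : StronglySynchronizing mu := by
  constructor
  · intro a b c r s h
    have hlen : r.length + 15 + s.length = 30 := by
      have := congrArg List.length h
      simp [mu_len] at this
      omega
    have hrle : r.length ≤ 15 := by omega
    have hmc : ((mu a ++ mu b).drop r.length).take 15 = mu c := by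
      rw [h, List.append_assoc, List.drop_left, List.take_left' (mu_len c)]
    rcases sync_check a b c ⟨r.length, by omega⟩ hmc with ⟨h0, hac⟩ | ⟨h15, hbc⟩
    · exact Or.inl ⟨List.eq_nil_of_length_eq_zero h0, hac⟩
    · refine Or.inr ⟨List.eq_nil_of_length_eq_zero ?_, hbc⟩
      simp at h15; omega
  · intro a b c x y hc hx hy
    have hxl : x.length ≤ 15 := by
      have := hx.length_le; rw [mu_len] at this; exact this
    have hlen : x.length + y.length = 15 := by
      have := congrArg List.length hc
      simp [mu_len] at this
      omega
    have hxe : x = (mu a).take x.length := by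
      obtain ⟨t, ht⟩ := hx
      rw [← ht, List.take_left]
    have hye : y = (mu b).drop x.length := by
      obtain ⟨t, ht⟩ := hy
      have htl : t.length = x.length := by
        have := congrArg List.length ht
        rw [mu_len] at this; simp at this; omega
      rw [← ht, ← htl, List.drop_left]
    have hm : mu c = (mu a).take x.length ++ (mu b).drop x.length := by
      rw [hc, ← hxe, ← hye]
    exact strong_check a b c ⟨x.length, by omega⟩ hm
end

section
/- Every binary word of length at least some bound $N$ contains a circular $4$-power; consequently there is no infinite binary word avoiding circular $4$-powers, i.e., $\rtc(2) \geq 4$. -/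
private def Zl : List (List (Fin 2)) := [[0],[1],[0,1],[1,0]]

private lemma claimA : ∀ a b c d : Fin 2, ∃ n : Fin 4, ∃ p : Fin 4,
    (Zl.get n ++ Zl.get n) <+: List.drop p [a,b,c,d] ∧
      (p : ℕ) + (Zl.get n ++ Zl.get n).length ≤ 4 := by decide

private lemma Zne : ∀ n : Fin 4, Zl.get n ≠ [] := by intro n; fin_cases n <;> decide

private lemma block (v : List (Fin 2)) (h : 4 ≤ v.length) :
    ∃ n : Fin 4, ∃ p : ℕ, p + (Zl.get n ++ Zl.get n).length ≤ 4 ∧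
      (Zl.get n ++ Zl.get n) <+: v.drop p := by
  match v, h with
  | a :: b :: c :: d :: rest, _ =>
    obtain ⟨n, p, hpre, hle⟩ := claimA a b c d
    refine ⟨n, p, hle, ?_⟩
    have h4 : (a :: b :: c :: d :: rest) = [a,b,c,d] ++ rest := rfl
    rw [h4, List.drop_append_of_le_length (by simp)]
    exact hpre.trans ⟨rest, rfl⟩

private lemma part1 : ∀ v : List (Fin 2), 20 ≤ v.length →
    ∃ x₁ t x₂ z : List (Fin 2), z ≠ [] ∧ (x₁ ++ t ++ x₂) <:+: v ∧
      x₂ ++ x₁ = z ++ z ++ z ++ z := by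
  intro v hv
  have hblock : ∀ j : Fin 5, ∃ n : Fin 4, ∃ p : ℕ,
      p + (Zl.get n ++ Zl.get n).length ≤ 4 ∧
      (Zl.get n ++ Zl.get n) <+: (v.drop (4 * j)).drop p := by
    intro j
    apply block
    rw [List.length_drop]
    have : (j : ℕ) ≤ 4 := by omega
    omega
  choose f p hple hpre using hblock
  obtain ⟨a, b, hab, hfab⟩ := Fintype.exists_ne_map_eq_of_card_lt f (by simp)
  -- wlog a < b
  wlog hlt : (a : ℕ) < (b : ℕ) generalizing a b
  · exact this b a hab.symm hfab.symm (by have := Fin.val_ne_of_ne hab; omega)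
  set n := f a with hn
  set q : List (Fin 2) := Zl.get n ++ Zl.get n with hq
  have hq1 : q <+: (v.drop (4 * a)).drop (p a) := hpre a
  have hq2 : q <+: (v.drop (4 * b)).drop (p b) := by rw [hq, hfab]; exact hpre b
  rw [List.drop_drop] at hq1 hq2
  set i := 4 * (a : ℕ) + p a with hi
  set m := 4 * (b : ℕ) + p b with hm
  have hiq : i + q.length ≤ m := by
    have h1 := hple a
    have hqlen : q.length = (Zl.get (f a) ++ Zl.get (f a)).length := rfl
    have : 4 * (a : ℕ) + 4 ≤ 4 * (b : ℕ) := by omega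
    omega
  obtain ⟨r1, hr1⟩ := hq1
  obtain ⟨r2, hr2⟩ := hq2
  have hr1' : r1 = v.drop (i + q.length) := by
    have := congrArg (List.drop q.length) hr1
    simpa [List.drop_drop, Nat.add_comm] using this
  set t : List (Fin 2) := (v.drop (i + q.length)).take (m - (i + q.length)) with ht
  have hdecomp : v.drop i = q ++ (t ++ (q ++ r2)) := by
    rw [← hr1, hr1']
    congr 1
    rw [hr2, ht]
    have := List.take_append_drop (m - (i + q.length)) (v.drop (i + q.length))
    rw [List.drop_drop] at this
    have hmeq : i + q.length + (m - (i + q.length)) = m := by omega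
    rw [hmeq] at this
    exact this.symm
  refine ⟨q, t, q, Zl.get n, Zne n, ?_, ?_⟩
  · have hpref : (q ++ t ++ q) <+: v.drop i := by
      refine ⟨r2, ?_⟩
      rw [hdecomp]; simp [List.append_assoc]
    exact hpref.isInfix.trans (v.drop_suffix i).isInfix
  · simp [hq, List.append_assoc]
private lemma factor_of_infix {α : Type*} {u : List α} {n : ℕ} {g : ℕ → α}
    (h : u <:+: (List.range n).map g) : FactorOf u g := by
  obtain ⟨s, r, hs⟩ := h
  refine ⟨s.length, ?_⟩
  have hlen : s.length + (u.length + r.length) = n := by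
    have := congrArg List.length hs
    simp at this; omega
  set A := (List.range s.length).map g with hA
  set B := (List.range u.length).map (fun k => g (s.length + k)) with hB
  set C := (List.range r.length).map (fun k => g (s.length + (u.length + k))) with hC
  have hsplit : (List.range n).map g = A ++ (B ++ C) := by
    rw [← hlen, List.range_add, List.map_append, List.range_add, List.map_append]
    simp [hA, hB, hC, Function.comp_def, Nat.add_assoc]
  have hs' : s ++ (u ++ r) = A ++ (B ++ C) := by
    rw [← hsplit, ← hs, List.append_assoc]
  have h1 := List.append_inj' hs' (by simp [hB, hC])
  have h2 := List.append_inj h1.2 (by simp [hB])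
  exact h2.1

/-- every sufficiently long binary word contains a circular 4-power;
consequently every infinite binary word contains a circular 4-power, i.e. `rtc(2) ≥ 4`. -/
theorem circular_fourth_powers_unavoidable_binary :
    (∃ N : ℕ, ∀ v : List (Fin 2), N ≤ v.length →
      ∃ x₁ t x₂ z : List (Fin 2), z ≠ [] ∧ (x₁ ++ t ++ x₂) <:+: v ∧
        x₂ ++ x₁ = z ++ z ++ z ++ z) ∧
    (∀ w : ℕ → Fin 2, ∃ x₁ t x₂ z : List (Fin 2), z ≠ [] ∧
      FactorOf (x₁ ++ t ++ x₂) w ∧ x₂ ++ x₁ = z ++ z ++ z ++ z) := by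
  refine ⟨⟨20, part1⟩, ?_⟩
  intro w
  obtain ⟨x₁, t, x₂, z, hz, hinf, heq⟩ :=
    part1 ((List.range 20).map w) (by simp)
  exact ⟨x₁, t, x₂, z, hz, factor_of_infix hinf, heq⟩
end

section
/- If $w$ is an infinite $2^+$-power-free binary word, then for every $i \geq 1$, no product of $i$ factors of $w$ has exponent exceeding $2i$; hence $\rt_i(2) = 2i$. -/
open scoped ENNReal

/-- The set of exponents of products of `i` factors of the infinite word `w`. -/
def prodExpSet (i : ℕ) (w : ℕ → Fin 2) : Set ℝ≥0∞ :=
  {e | ∃ l : List (List (Fin 2)), l.length = i ∧ (∀ x ∈ l, FactorOf x w) ∧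
    ∃ p : ℕ, HasPeriod l.flatten p ∧ e = (l.flatten.length : ℝ≥0∞) / p}

lemma getElem?_flatten_replicate {α : Type*} (u : List α) (n m : ℕ)
    (hm : m < n * u.length) :
    ((List.replicate n u).flatten)[m]? = u[m % u.length]? := by
  induction n generalizing m with
  | zero => simp at hm
  | succ n ih =>
    rw [List.replicate_succ, List.flatten_cons]
    by_cases h : m < u.length
    · rw [List.getElem?_append_left h, Nat.mod_eq_of_lt h]
    · push_neg at h
      rw [List.getElem?_append_right h]
      have hlen : m - u.length < n * u.length := by
        have : (n + 1) * u.length = n * u.length + u.length := by ring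
        omega
      rw [ih _ hlen]
      congr 1
      conv_rhs => rw [← Nat.sub_add_cancel h]
      rw [Nat.add_mod_right]

lemma length_flatten_replicate {α : Type*} (u : List α) (n : ℕ) :
    ((List.replicate n u).flatten).length = n * u.length := by
  simp [List.length_flatten, List.map_replicate, List.sum_replicate, smul_eq_mul]

lemma hasPeriod_flatten_replicate {α : Type*} (u : List α) (n : ℕ) (hn : 1 ≤ n)
    (hu : u ≠ []) : HasPeriod ((List.replicate n u).flatten) u.length := by
  have hu0 : 0 < u.length := List.length_pos_iff.mpr hu
  refine ⟨hu0, ?_, ?_⟩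
  · rw [length_flatten_replicate]; nlinarith
  · intro j hj
    rw [length_flatten_replicate] at hj
    rw [getElem?_flatten_replicate u n _ hj, getElem?_flatten_replicate u n j (by omega),
      Nat.add_mod_right]

lemma hasPeriod_middle {α : Type*} (a x b : List α) (p : ℕ)
    (h : HasPeriod (a ++ x ++ b) p) (hp : p ≤ x.length) : HasPeriod x p := by
  obtain ⟨hp0, _, hper⟩ := h
  refine ⟨hp0, hp, ?_⟩
  intro j hj
  have key : ∀ m, m < x.length → (a ++ x ++ b)[a.length + m]? = x[m]? := by
    intro m hm
    rw [List.append_assoc, List.getElem?_append_right (Nat.le_add_right _ _),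
        Nat.add_sub_cancel_left, List.getElem?_append_left hm]
  have h3 := hper (a.length + j) (by simp [List.length_append]; omega)
  rw [show a.length + j + p = a.length + (j + p) by omega] at h3
  rwa [key (j + p) hj, key j (by omega)] at h3

lemma exists_long {α : Type*} (l : List (List α)) (p : ℕ)
    (hlen : 2 * l.length * p < l.flatten.length) : ∃ x ∈ l, 2 * p < x.length := by
  by_contra h
  push_neg at h
  have hb : ∀ y ∈ l.map List.length, y ≤ 2 * p := by
    intro y hy
    obtain ⟨x, hx, rfl⟩ := List.mem_map.mp hy
    exact h x hx
  have := List.sum_le_card_nsmul _ _ hb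
  rw [List.length_flatten] at hlen
  simp only [smul_eq_mul, List.length_map] at this
  have heq : 2 * l.length * p = l.length * (2 * p) := by ring
  omega

lemma fin2_eq {a b c : Fin 2} (h1 : a ≠ b) (h2 : c ≠ b) : a = c := by
  fin_cases a <;> fin_cases b <;> fin_cases c <;> simp_all

lemma flatten_replicate_double {α : Type*} (u : List α) (n : ℕ) :
    (List.replicate n (u ++ u)).flatten = (List.replicate (2 * n) u).flatten := by
  induction n with
  | zero => simp
  | succ n ih =>
    rw [List.replicate_succ, List.flatten_cons, ih,
        show 2 * (n + 1) = 2 * n + 1 + 1 by ring,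
        List.replicate_succ, List.replicate_succ, List.flatten_cons, List.flatten_cons,
        List.append_assoc]

lemma mem_prodExpSet_of_square (w' : ℕ → Fin 2) (i : ℕ) (hi : 1 ≤ i) :
    (2 * i : ℝ≥0∞) ∈ prodExpSet i w' := by
  obtain ⟨u, j, hu, hfac⟩ : ∃ (u : List (Fin 2)) (j : ℕ), u ≠ [] ∧
      u ++ u = (List.range (u ++ u).length).map (fun k => w' (j + k)) := by
    by_cases h01 : w' 0 = w' 1
    · refine ⟨[w' 0], 0, by simp, ?_⟩
      show [w' 0, w' 0] = (List.range 2).map (fun k => w' (0 + k))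
      rw [show List.range 2 = [0, 1] from rfl]
      simp [h01]
    · by_cases h12 : w' 1 = w' 2
      · refine ⟨[w' 1], 1, by simp, ?_⟩
        show [w' 1, w' 1] = (List.range 2).map (fun k => w' (1 + k))
        rw [show List.range 2 = [0, 1] from rfl]
        simp [h12]
      · by_cases h23 : w' 2 = w' 3
        · refine ⟨[w' 2], 2, by simp, ?_⟩
          show [w' 2, w' 2] = (List.range 2).map (fun k => w' (2 + k))
          rw [show List.range 2 = [0, 1] from rfl]
          simp [h23]
        · have h20 : w' 2 = w' 0 := fin2_eq (Ne.symm h12) h01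
          have h31 : w' 3 = w' 1 := fin2_eq (Ne.symm h23) h12
          refine ⟨[w' 0, w' 1], 0, by simp, ?_⟩
          show [w' 0, w' 1, w' 0, w' 1] = (List.range 4).map (fun k => w' (0 + k))
          rw [show List.range 4 = [0, 1, 2, 3] from rfl]
          simp [h20, h31]
  have hu0 : 0 < u.length := List.length_pos_iff.mpr hu
  refine ⟨List.replicate i (u ++ u), by simp, ?_, u.length, ?_, ?_⟩
  · intro x hx
    rw [List.eq_of_mem_replicate hx]
    exact ⟨j, hfac⟩
  · rw [flatten_replicate_double]
    exact hasPeriod_flatten_replicate u (2 * i) (by omega) hu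
  · rw [flatten_replicate_double, length_flatten_replicate]
    rw [ENNReal.eq_div_iff (by exact_mod_cast hu0.ne') (ENNReal.natCast_ne_top _)]
    push_cast
    ring

/-- if `w` is an infinite `2⁺`-power-free binary word, then no product of
`i` factors of `w` has exponent exceeding `2i`; hence `rt_i(2) = 2i`. -/
theorem overlap_free_prod_exponent (w : ℕ → Fin 2)
    (hfree : ∀ (v : List (Fin 2)) (p : ℕ), FactorOf v w → HasPeriod v p →
      v.length ≤ 2 * p) :
    (∀ i : ℕ, 1 ≤ i → ∀ l : List (List (Fin 2)), l.length = i →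
      (∀ x ∈ l, FactorOf x w) → ∀ p : ℕ, HasPeriod l.flatten p →
        l.flatten.length ≤ 2 * i * p) ∧
    (∀ i : ℕ, 1 ≤ i →
      (⨅ w' : ℕ → Fin 2, sSup (prodExpSet i w')) = (2 * i : ℝ≥0∞)) := by
  have P1 : ∀ i : ℕ, ∀ l : List (List (Fin 2)), l.length = i →
      (∀ x ∈ l, FactorOf x w) → ∀ p : ℕ, HasPeriod l.flatten p →
        l.flatten.length ≤ 2 * i * p := by
    intro i l hl hfac p hper
    by_contra hcon
    push_neg at hcon
    obtain ⟨x, hx, hxlong⟩ := exists_long l p (by rw [hl]; omega)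
    obtain ⟨s, t, rfl⟩ := List.append_of_mem hx
    have hflat : (s ++ x :: t).flatten = s.flatten ++ x ++ t.flatten := by
      rw [List.flatten_append, List.flatten_cons, List.append_assoc]
    rw [hflat] at hper
    have hxp : HasPeriod x p := hasPeriod_middle _ _ _ p hper (by omega)
    have := hfree x p (hfac x hx) hxp
    omega
  refine ⟨fun i _ => P1 i, fun i hi => ?_⟩
  apply le_antisymm
  · refine iInf_le_of_le w (sSup_le ?_)
    rintro e ⟨l, hl, hfac, p, hper, rfl⟩
    have hlen := P1 i l hl hfac p hper
    have hp0 : (p : ℝ≥0∞) ≠ 0 := by exact_mod_cast hper.1.ne'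
    rw [ENNReal.div_le_iff hp0 (ENNReal.natCast_ne_top p)]
    calc (l.flatten.length : ℝ≥0∞) ≤ ((2 * i * p : ℕ) : ℝ≥0∞) := by exact_mod_cast hlen
      _ = 2 * i * p := by push_cast; ring
  · exact le_iInf fun w' => le_sSup (mem_prodExpSet_of_square w' i hi)
end

section
/- Let $h:\Gamma_1^* \to \Gamma^*$ be a strongly synchronizing $q$-uniform morphism and let $w$ be an infinite word over $\Gamma_1$ that is squarefree and circularly cubefree. If $x_1 t x_2$ is a factor of $h(w)$ and $x_2 x_1$ is a $\beta$-power for some $\beta > 13/4$, then $|x_2 x_1| < 22q$. -/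
/-- The image of the infinite word `w` under the `q`-uniform morphism `h`, as an
infinite word. -/
def morphImage {α β : Type*} [Inhabited β] (h : α → List β) (q : ℕ) (w : ℕ → α) :
    ℕ → β := fun n => (h (w (n / q))).getD (n % q) default

namespace CP19

def seg {β : Type*} (f : ℕ → β) (a m : ℕ) : List β := (List.range m).map (fun k => f (a + k))

@[simp] lemma seg_length {β : Type*} (f : ℕ → β) (a m : ℕ) : (seg f a m).length = m := by
  simp [seg]

lemma seg_getElem {β : Type*} (f : ℕ → β) (a m k : ℕ)
    (hk' : k < (seg f a m).length) :
    (seg f a m)[k] = f (a + k) := by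
  simp [seg]

lemma seg_getElem? {β : Type*} (f : ℕ → β) (a m k : ℕ) (hk : k < m) :
    (seg f a m)[k]? = some (f (a + k)) := by
  rw [List.getElem?_eq_getElem (by simpa), seg_getElem]

lemma seg_ext {β : Type*} {f g : ℕ → β} {a b m : ℕ}
    (h : ∀ j < m, f (a + j) = g (b + j)) : seg f a m = seg g b m := by
  apply List.ext_getElem (by simp)
  intro i h1 h2
  rw [seg_getElem _ _ _ _ h1, seg_getElem _ _ _ _ h2]
  exact h i (by simpa using h1)

lemma seg_append {β : Type*} (f : ℕ → β) (a m k : ℕ) :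
    seg f a (m + k) = seg f a m ++ seg f (a + m) k := by
  unfold seg
  rw [List.range_add, List.map_append, List.map_map]
  congr 1
  apply List.map_congr_left
  intro j _
  simp [Nat.add_assoc]

lemma seg_factorOf {α : Type*} (w : ℕ → α) (a m : ℕ) : FactorOf (seg w a m) w :=
  ⟨a, by simp [seg]⟩

lemma seg_cube {α : Type*} (g : ℕ → α) (n : ℕ)
    (hper : ∀ k, k + n < 3 * n → g (k + n) = g k) :
    seg g 0 (3 * n) = seg g 0 n ++ seg g 0 n ++ seg g 0 n := by
  rw [show 3 * n = n + (n + n) from by ring, seg_append, seg_append]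
  have h1 : seg g (0 + n) n = seg g 0 n := by
    apply seg_ext; intro j hj
    have := hper j (by omega)
    rw [show 0 + n + j = j + n by omega, this, Nat.zero_add]
  have h2 : seg g (0 + n + n) n = seg g 0 n := by
    apply seg_ext; intro j hj
    have e1 := hper (j + n) (by omega)
    have e2 := hper j (by omega)
    rw [show 0 + n + n + j = j + n + n by omega, e1, e2, Nat.zero_add]
  rw [h1, h2, List.append_assoc]

lemma seg_square {α : Type*} (g : ℕ → α) (n : ℕ)
    (hper : ∀ k, k + n < 2 * n → g (k + n) = g k) :
    seg g 0 (2 * n) = seg g 0 n ++ seg g 0 n := by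
  rw [show 2 * n = n + n from by ring, seg_append]
  have h1 : seg g (0 + n) n = seg g 0 n := by
    apply seg_ext; intro j hj
    have := hper j (by omega)
    rw [show 0 + n + j = j + n by omega, this, Nat.zero_add]
  rw [h1]

end CP19

open CP19

/-- if `h` is a strongly synchronizing `q`-uniform morphism and `w` is
squarefree and circularly cubefree, then every circular `(13/4)⁺`-power of `h(w)` has
length less than `22q`. -/
theorem circular_powers_in_morphic_image {α β : Type*} [Inhabited β]
    (h : α → List β) (q : ℕ) (hq : 0 < q) (huni : ∀ a : α, (h a).length = q)
    (hssm : StronglySynchronizing h) (w : ℕ → α)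
    (hsf : ∀ z : List α, z ≠ [] → ¬ FactorOf (z ++ z) w)
    (hccf : ∀ x₁ t x₂ z : List α, z ≠ [] → FactorOf (x₁ ++ t ++ x₂) w →
      x₂ ++ x₁ ≠ z ++ z ++ z) :
    ∀ (x₁ t x₂ : List β) (β' : ℚ) (p : ℕ),
      FactorOf (x₁ ++ t ++ x₂) (morphImage h q w) → (13 : ℚ) / 4 < β' →
      HasPeriod (x₂ ++ x₁) p → ((x₂ ++ x₁).length : ℚ) = β' * p →
      (x₂ ++ x₁).length < 22 * q := by
  intro x₁ t x₂ β' p hfac hβ hper hlen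
  by_contra hL
  push_neg at hL
  obtain ⟨hp0, hple, hperiod⟩ := hper
  obtain ⟨i, hfac⟩ := hfac
  set y : ℕ → β := morphImage h q w with hy_def
  set ℓ₁ := x₁.length with hℓ₁
  set ℓ₂ := x₂.length with hℓ₂
  set τ := t.length with hτ
  set a₂ := i + ℓ₁ + τ with ha₂
  have hLlen : (x₂ ++ x₁).length = ℓ₂ + ℓ₁ := by simp [hℓ₁, hℓ₂]
  rw [hLlen] at hL hple hperiod hlen
  -- 13 p < 4 L
  have h13 : 13 * p < 4 * (ℓ₂ + ℓ₁) := by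
    have hp0' : (0:ℚ) < (p:ℚ) := by exact_mod_cast hp0
    have : (13:ℚ) * p < 4 * (ℓ₂ + ℓ₁ : ℕ) := by
      rw [hlen]; nlinarith
    exact_mod_cast this
  -- basic block lemma
  have hyval : ∀ j r : ℕ, r < q → y (j * q + r) = (h (w j)).getD r default := by
    intro j r hr
    show morphImage h q w (j * q + r) = _
    unfold morphImage
    rw [show j * q + r = q * j + r from by ring]
    rw [Nat.mul_add_div hq, Nat.mul_add_mod, Nat.div_eq_of_lt hr, Nat.mod_eq_of_lt hr, Nat.add_zero]
  have hblock : ∀ j : ℕ, seg y (j * q) q = h (w j) := by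
    intro j
    apply List.ext_getElem (by simp [huni])
    intro r h1 h2
    rw [seg_getElem _ _ _ _ h1]
    rw [hyval j r (by simpa using h1)]
    rw [List.getD_eq_getElem _ _ h2]
  -- extract segments
  have hfac' : x₁ ++ (t ++ x₂) = seg y i (ℓ₁ + (τ + ℓ₂)) := by
    rw [← List.append_assoc]
    rw [hfac]
    simp only [List.length_append, ← hℓ₁, ← hℓ₂, ← hτ]
    rw [Nat.add_assoc]
    rfl
  rw [seg_append, seg_append] at hfac'
  obtain ⟨hx1, hfac''⟩ := List.append_inj hfac' (by simp [hℓ₁])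
  obtain ⟨hxt, hx2⟩ := List.append_inj hfac'' (by simp [hτ])
  rw [show i + ℓ₁ + τ = a₂ from rfl] at hx2
  -- pointwise values of x₂ ++ x₁
  have hv2 : ∀ k, k < ℓ₂ → (x₂ ++ x₁)[k]? = some (y (a₂ + k)) := by
    intro k hk
    rw [List.getElem?_append, if_pos (by simpa using hk), hx2, seg_getElem? _ _ _ _ hk]
  have hv1 : ∀ k, ℓ₂ ≤ k → k < ℓ₂ + ℓ₁ → (x₂ ++ x₁)[k]? = some (y (i + (k - ℓ₂))) := by
    intro k hk1 hk2
    rw [List.getElem?_append, if_neg (by simp; omega), hx1]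
    rw [show (x₂.length : ℕ) = ℓ₂ from rfl]
    rw [seg_getElem? _ _ _ _ (by omega)]
  -- the three periodicity relations
  have hper2 : ∀ s, s + p < ℓ₂ → y (a₂ + (s + p)) = y (a₂ + s) := by
    intro s hs
    have := hperiod s (by omega)
    rw [hv2 _ hs, hv2 _ (by omega)] at this
    exact Option.some.inj this
  have hper1 : ∀ s, s + p < ℓ₁ → y (i + (s + p)) = y (i + s) := by
    intro s hs
    have := hperiod (ℓ₂ + s) (by omega)
    rw [hv1 _ (by omega) (by omega), hv1 _ (by omega) (by omega)] at this
    have e := Option.some.inj this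
    rw [show ℓ₂ + s + p - ℓ₂ = s + p by omega, show ℓ₂ + s - ℓ₂ = s by omega] at e
    exact e
  have hcross : ∀ s, s < ℓ₂ → ℓ₂ ≤ s + p → s + p < ℓ₂ + ℓ₁ →
      y (i + (s + p - ℓ₂)) = y (a₂ + s) := by
    intro s h1 h2 h3
    have := hperiod s (by omega)
    rw [hv2 _ h1, hv1 _ h2 h3] at this
    exact Option.some.inj this
  -- synchronization lemma
  have hsync : ∀ j t₀ : ℕ, (∀ r, r < q → y (t₀ + r) = y (j * q + r)) →
      q ∣ t₀ ∧ w j = w (t₀ / q) := by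
    intro j t₀ hcont
    have hdm := Nat.div_add_mod t₀ q
    set k := t₀ / q with hk
    set d := t₀ % q with hd
    have hdq : d < q := Nat.mod_lt _ hq
    have hseg : seg y t₀ q = seg y (j * q) q := seg_ext (fun r hr => hcont r hr)
    have key : h (w k) ++ h (w (k + 1)) =
        seg y (k * q) d ++ h (w j) ++ seg y (t₀ + q) (q - d) := by
      rw [← hblock k, ← hblock (k+1), ← hblock j, ← hseg]
      rw [show (k+1) * q = k * q + q from by ring]
      rw [← seg_append]
      rw [List.append_assoc, ← seg_append]
      rw [show t₀ = k * q + d from by rw [mul_comm]; omega]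
      rw [← seg_append]
      congr 1
      omega
    rcases hssm.1 (w k) (w (k+1)) (w j) _ _ key with ⟨hr, hjk⟩ | ⟨hs, _⟩
    · have : d = 0 := by
        have := congrArg List.length hr; simpa using this
      constructor
      · exact ⟨k, by omega⟩
      · exact hjk.symm
    · exfalso
      have := congrArg List.length hs
      simp at this
      omega
  -- injectivity of h
  have hinj : ∀ a c : α, h a = h c → a = c := by
    intro a c hac
    rcases hssm.2 a a c (h c) [] (by simp) (by rw [← hac]) (by simp) with h1 | h1
    · exact h1.symm
    · exact h1.symm
  -- Step 2: q ∣ p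
  have pieceQ : ∀ c₀ len : ℕ, (∀ s, s + p < len → y (c₀ + (s + p)) = y (c₀ + s)) →
      p + 2 * q ≤ len → q ∣ p := by
    intro c₀ len hpp hlen2
    obtain ⟨u, ρu, hu, hρu⟩ : ∃ u ρu, u * q + ρu = c₀ ∧ ρu < q :=
      ⟨c₀ / q, c₀ % q, Nat.div_add_mod' c₀ q, Nat.mod_lt c₀ hq⟩
    have hexp : (u + 1) * q = u * q + q := by ring
    have hdvdU : q ∣ u * q + q := ⟨u + 1, by ring⟩
    set U := u * q with hU
    clear_value U
    have hcont : ∀ r, r < q → y ((U + q + p) + r) = y ((u + 1) * q + r) := by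
      intro r hr
      rw [hexp]
      have hs := hpp (U + q + r - c₀) (by omega)
      rw [show c₀ + (U + q + r - c₀ + p) = U + q + p + r by omega,
          show c₀ + (U + q + r - c₀) = U + q + r by omega] at hs
      exact hs
    have hdvd := (hsync (u + 1) (U + q + p) hcont).1
    have := Nat.dvd_sub hdvd hdvdU
    rwa [show U + q + p - (U + q) = p by omega] at this
  have hdvdp : q ∣ p := by
    rcases le_total ℓ₁ ℓ₂ with hc | hc
    · exact pieceQ a₂ ℓ₂ hper2 (by omega)
    · exact pieceQ i ℓ₁ hper1 (by omega)
  obtain ⟨n, hpn⟩ := hdvdp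
  have hn1 : 1 ≤ n := by
    rcases Nat.eq_zero_or_pos n with h0 | h0
    · rw [h0, Nat.mul_zero] at hpn; omega
    · exact h0
  -- Step 4: no long squares
  have sqFalse : ∀ c₀ len : ℕ, (∀ s, s + p < len → y (c₀ + (s + p)) = y (c₀ + s)) →
      2 * p + 2 * q ≤ len → False := by
    intro c₀ len hpp hlen2
    obtain ⟨u, ρu, hu, hρu⟩ : ∃ u ρu, u * q + ρu = c₀ ∧ ρu < q :=
      ⟨c₀ / q, c₀ % q, Nat.div_add_mod' c₀ q, Nat.mod_lt c₀ hq⟩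
    have hlet : ∀ k, k < n → w (u + 1 + k + n) = w (u + 1 + k) := by
      intro k hk
      apply hinj
      rw [← hblock, ← hblock]
      apply seg_ext
      intro r hr
      have hexp1 : (u + 1 + k + n) * q + r = u * q + q + k * q + q * n + r := by ring
      have hexp2 : (u + 1 + k) * q + r = u * q + q + k * q + r := by ring
      have hkq : k * q + q ≤ q * n := by
        have h1 : (k + 1) * q ≤ n * q := Nat.mul_le_mul_right q hk
        calc k * q + q = (k + 1) * q := by ring
          _ ≤ n * q := h1
          _ = q * n := by ring
      rw [hexp1, hexp2]
      rw [← hpn]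
      set U := u * q with hU; clear_value U
      set K := k * q with hK; clear_value K
      have hs := hpp (U + q + K + r - c₀) (by omega)
      rw [show c₀ + (U + q + K + r - c₀ + p) = U + q + K + p + r by omega,
          show c₀ + (U + q + K + r - c₀) = U + q + K + r by omega] at hs
      exact hs
    have hzper : ∀ m, m + n < 2 * n → w (u + 1 + (m + n)) = w (u + 1 + m) := by
      intro m hm
      rw [← Nat.add_assoc]
      exact hlet m (by omega)
    have hsq := seg_square (fun j => w (u + 1 + j)) n (by
      intro k hk
      have := hzper k hk
      simpa using this)
    have hg : ∀ m : ℕ, seg (fun j => w (u + 1 + j)) 0 m = seg w (u + 1) m := by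
      intro m
      apply seg_ext
      intro j hj
      simp
    apply hsf (seg w (u + 1) n)
    · intro hnil
      have := congrArg List.length hnil
      simp at this
      omega
    · have heq : seg w (u + 1) n ++ seg w (u + 1) n = seg w (u + 1) (2 * n) := by
        rw [← hg, ← hg, ← hsq, hg]
      rw [heq]
      exact seg_factorOf w (u + 1) (2 * n)
  have hs2 : ℓ₂ < 2 * p + 2 * q := by
    by_contra hc; push_neg at hc; exact sqFalse a₂ ℓ₂ hper2 hc
  have hs1 : ℓ₁ < 2 * p + 2 * q := by
    by_contra hc; push_neg at hc; exact sqFalse i ℓ₁ hper1 hc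
  have hmin2 : 6 * q < ℓ₂ := by omega
  have hmin1 : 6 * q < ℓ₁ := by omega
  have hn3 : 3 ≤ n := by
    have hp2q : q * 2 < p := by omega
    rw [hpn] at hp2q
    have := Nat.lt_of_mul_lt_mul_left hp2q
    omega
  have h2qp : 2 * q ≤ p := by
    rw [hpn]
    calc 2 * q = q * 2 := by ring
      _ ≤ q * n := Nat.mul_le_mul_left q (by omega)

  -- Step 5: q divides ℓ₂ + ℓ₁ + τ
  have hphase : q ∣ ℓ₂ + ℓ₁ + τ := by
    obtain ⟨u, ρu, hu, hρu⟩ : ∃ u ρu, u * q + ρu = a₂ + (ℓ₂ - p) ∧ ρu < q :=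
      ⟨_ / q, _ % q, Nat.div_add_mod' _ q, Nat.mod_lt _ hq⟩
    have hexp : (u + 1) * q = u * q + q := by ring
    have hdvdB : q ∣ u * q + q := ⟨u + 1, by ring⟩
    set U := u * q with hU
    clear_value U
    have hge : a₂ + ℓ₂ ≤ i + (U + q + p) := by omega
    have hcont : ∀ r, r < q → y ((i + (U + q + p) - (a₂ + ℓ₂)) + r) = y ((u + 1) * q + r) := by
      intro r hr
      rw [hexp]
      have hs := hcross (U + q + r - a₂) (by omega) (by omega) (by omega)
      rw [show a₂ + (U + q + r - a₂) = U + q + r by omega,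
          show i + (U + q + r - a₂ + p - ℓ₂) = (i + (U + q + p) - (a₂ + ℓ₂)) + r by omega] at hs
      exact hs
    have hdvdT := (hsync (u + 1) _ hcont).1
    have hdvdBp : q ∣ U + q + p := by
      exact dvd_add hdvdB ⟨n, hpn⟩
    have := Nat.dvd_sub hdvdBp hdvdT
    rwa [show U + q + p - (i + (U + q + p) - (a₂ + ℓ₂)) = ℓ₂ + ℓ₁ + τ by omega] at this
  obtain ⟨md, hmd⟩ := hphase
  -- Step 6 coordinates
  obtain ⟨g₁, ρ, hg₁, hρq⟩ : ∃ g ρ', g * q + ρ' = i ∧ ρ' < q :=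
    ⟨i / q, i % q, Nat.div_add_mod' i q, Nat.mod_lt i hq⟩
  obtain ⟨k₁, μ₁, hk₁, hμ₁⟩ : ∃ k μ, k * q + μ = i + ℓ₁ ∧ μ < q :=
    ⟨_ / q, _ % q, Nat.div_add_mod' _ q, Nat.mod_lt _ hq⟩
  obtain ⟨j₂, δ, hj₂, hδq⟩ : ∃ j δ', j * q = a₂ + δ' ∧ δ' < q := by
    obtain ⟨u, ρu, hu, hρu⟩ : ∃ u ρu, u * q + ρu = a₂ ∧ ρu < q :=
      ⟨_ / q, _ % q, Nat.div_add_mod' _ q, Nat.mod_lt _ hq⟩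
    rcases Nat.eq_zero_or_pos ρu with h0 | h0
    · refine ⟨u, 0, ?_, hq⟩
      set U := u * q with hUd; clear_value U; omega
    · refine ⟨u + 1, q - ρu, ?_, by omega⟩
      have hexp : (u + 1) * q = u * q + q := by ring
      rw [hexp]
      set U := u * q with hUd; clear_value U; omega
  have hk₂ : (g₁ + md) * q + ρ = a₂ + ℓ₂ := by
    have hexp : (g₁ + md) * q = g₁ * q + q * md := by ring
    rw [hexp]
    set A := g₁ * q; clear_value A
    set B := q * md; clear_value B
    omega
  set k₂ := g₁ + md with hk₂d
  clear_value k₂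
  -- j₂ < k₂
  have hj₂k₂ : j₂ < k₂ := by
    have hmul : j₂ * q < k₂ * q := by
      set A := j₂ * q; clear_value A
      set B := k₂ * q; clear_value B
      omega
    exact Nat.lt_of_mul_lt_mul_right hmul
  obtain ⟨m₀, hm₀⟩ : ∃ m, j₂ + m = k₂ := ⟨k₂ - j₂, by omega⟩
  have hm₀q : δ + m₀ * q + ρ = ℓ₂ := by
    have := congrArg (· * q) hm₀
    simp only [add_mul] at this
    set A := j₂ * q; clear_value A
    set B := m₀ * q; clear_value B
    set C := k₂ * q; clear_value C
    omega
  -- k₁ ≥ g₁ + 2 and k₁ ≤ j₂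
  have hk₁g : g₁ + 2 ≤ k₁ := by
    have hmul : (g₁ + 1) * q < k₁ * q := by
      have hexp : (g₁ + 1) * q = g₁ * q + q := by ring
      rw [hexp]
      set A := g₁ * q; clear_value A
      set B := k₁ * q; clear_value B
      omega
    have := Nat.lt_of_mul_lt_mul_right hmul
    omega
  have hk₁j₂ : k₁ ≤ j₂ := by
    have hmul : k₁ * q ≤ j₂ * q := by
      set A := k₁ * q; clear_value A
      set B := j₂ * q; clear_value B
      omega
    exact Nat.le_of_mul_le_mul_right hmul hq
  obtain ⟨m₁, hm₁⟩ : ∃ m, g₁ + 1 + m = k₁ := ⟨k₁ - g₁ - 1, by omega⟩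
  set M := m₀ + 1 + m₁ with hMd
  -- total length
  have hML : δ + M * q + μ₁ = ℓ₂ + ℓ₁ := by
    have hexpM : M * q = m₀ * q + q + m₁ * q := by rw [hMd]; ring
    have hexpk : (g₁ + 1 + m₁) * q = g₁ * q + q + m₁ * q := by ring
    have hkk : (g₁ + 1 + m₁) * q = k₁ * q := by rw [hm₁]
    rw [hexpk] at hkk
    rw [hexpM]
    set A := m₀ * q; clear_value A
    set B := m₁ * q; clear_value B
    set C := g₁ * q; clear_value C
    set D := k₁ * q; clear_value D
    omega
  -- 3n ≤ M
  have hM3n : 3 * n ≤ M := by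
    rcases le_or_gt n 7 with h7 | h7
    · have h20 : 20 * q < M * q := by
        set A := M * q; clear_value A; omega
      have := Nat.lt_of_mul_lt_mul_right h20
      omega
    · have key : (12 * n) * q < (4 * M) * q := by
        have e1 : (4 * M) * q = 4 * (M * q) := by ring
        have e2 : (12 * n) * q = 12 * (q * n) := by ring
        rw [e1, e2, ← hpn]
        have hp8 : 8 * q ≤ p := by
          rw [hpn]
          calc 8 * q = q * 8 := by ring
            _ ≤ q * n := Nat.mul_le_mul_left q (by omega)
        set A := M * q; clear_value A
        omega
      have := Nat.lt_of_mul_lt_mul_right key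
      omega
  -- the interleaved word F and its period
  set F : ℕ → β := fun s => if s < ℓ₂ then y (a₂ + s) else y (i + (s - ℓ₂)) with hF
  have hFval : ∀ s, F s = if s < ℓ₂ then y (a₂ + s) else y (i + (s - ℓ₂)) := fun s => by rw [hF]
  have hFP : ∀ s, s + p < ℓ₂ + ℓ₁ → F (s + p) = F s := by
    intro s hs
    rw [hFval, hFval]
    by_cases h1 : s < ℓ₂
    · by_cases h2 : s + p < ℓ₂
      · rw [if_pos h1, if_pos h2]; exact hper2 s h2
      · rw [if_pos h1, if_neg h2]
        exact hcross s h1 (by omega) hs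
    · rw [if_neg h1, if_neg (by omega)]
      have := hper1 (s - ℓ₂) (by omega)
      rw [show s - ℓ₂ + p = s + p - ℓ₂ by omega] at this
      exact this
  -- block contents of the combined word
  set Cb : ℕ → List β := fun k => seg F (δ + k * q) q with hCbd
  have hCval : ∀ k, Cb k = seg F (δ + k * q) q := fun k => by rw [hCbd]
  have hCper : ∀ k, k + n < M → Cb (k + n) = Cb k := by
    intro k hk
    rw [hCval, hCval]
    apply seg_ext
    intro r hr
    have hexp1 : (k + n) * q = k * q + q * n := by ring
    have hkM : k * q + q * n + q ≤ M * q := by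
      have h1 : (k + n + 1) * q ≤ M * q := Nat.mul_le_mul_right q (by omega)
      calc k * q + q * n + q = (k + n + 1) * q := by ring
        _ ≤ M * q := h1
    rw [hexp1, ← hpn] at *
    have hcond : (δ + k * q + r) + p < ℓ₂ + ℓ₁ := by
      set A := k * q; clear_value A
      set B := M * q; clear_value B
      omega
    have := hFP (δ + k * q + r) hcond
    rw [show δ + k * q + r + p = δ + (k * q + p) + r by ring] at this
    exact this
  have hC2 : ∀ k, k < m₀ → Cb k = h (w (j₂ + k)) := by
    intro k hk
    rw [hCval, ← hblock (j₂ + k)]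
    apply seg_ext
    intro r hr
    have hbk : k * q + q ≤ m₀ * q := by
      have h1 : (k + 1) * q ≤ m₀ * q := Nat.mul_le_mul_right q (by omega)
      calc k * q + q = (k + 1) * q := by ring
        _ ≤ m₀ * q := h1
    have hexp : (j₂ + k) * q = j₂ * q + k * q := by ring
    have hlt : δ + k * q + r < ℓ₂ := by
      set A := k * q; clear_value A
      set B := m₀ * q; clear_value B
      omega
    rw [hFval, if_pos hlt, hexp]
    congr 1
    set A := k * q; clear_value A
    set B := j₂ * q; clear_value B
    omega
  have hC1 : ∀ k, m₀ + 1 ≤ k → k < M → Cb k = h (w (g₁ + 1 + (k - m₀ - 1))) := by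
    intro k hk1 hk2
    obtain ⟨k', hk'⟩ : ∃ k', k = m₀ + 1 + k' := ⟨k - m₀ - 1, by omega⟩
    subst hk'
    rw [show m₀ + 1 + k' - m₀ - 1 = k' from by omega]
    rw [hCval, ← hblock (g₁ + 1 + k')]
    apply seg_ext
    intro r hr
    have hexp1 : (m₀ + 1 + k') * q = m₀ * q + q + k' * q := by ring
    have hexp2 : (g₁ + 1 + k') * q = g₁ * q + q + k' * q := by ring
    rw [hexp1, hexp2]
    have hge : ¬ (δ + (m₀ * q + q + k' * q) + r < ℓ₂) := by
      set A := m₀ * q; clear_value A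
      set B := k' * q; clear_value B
      omega
    rw [hFval, if_neg hge]
    congr 1
    set A := m₀ * q; clear_value A
    set B := k' * q; clear_value B
    set C := g₁ * q; clear_value C
    omega
  have hChyb : Cb m₀ = seg y (k₂ * q) ρ ++ seg y i (q - ρ) := by
    rw [hCval]
    have hsplit : seg F (δ + m₀ * q) q = seg F (δ + m₀ * q) ρ ++ seg F (δ + m₀ * q + ρ) (q - ρ) := by
      rw [← seg_append]; congr 1; omega
    rw [hsplit]
    congr 1
    · apply seg_ext
      intro r hr
      have hkq : k₂ * q = j₂ * q + m₀ * q := by rw [← hm₀]; ring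
      have hlt : δ + m₀ * q + r < ℓ₂ := by
        set A := m₀ * q; clear_value A; omega
      rw [hFval, if_pos hlt, hkq]
      congr 1
      set A := m₀ * q; clear_value A
      set B := j₂ * q; clear_value B
      omega
    · apply seg_ext
      intro r hr
      have harg : δ + m₀ * q + ρ + r = ℓ₂ + r := by
        set A := m₀ * q; clear_value A; omega
      rw [harg, hFval, if_neg (by omega)]
      congr 1
      omega
  -- the hybrid block is the image of a letter
  obtain ⟨c, hS⟩ : ∃ c, seg y (k₂ * q) ρ ++ seg y i (q - ρ) = h c := by
    rcases le_or_gt n m₀ with hcs | hcs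
    · refine ⟨w (j₂ + (m₀ - n)), ?_⟩
      rw [← hChyb]
      have h1 := hCper (m₀ - n) (by omega)
      rw [show m₀ - n + n = m₀ from by omega] at h1
      rw [h1]
      exact hC2 (m₀ - n) (by omega)
    · refine ⟨w (g₁ + 1 + (n - 1)), ?_⟩
      rw [← hChyb]
      have h1 := hCper m₀ (by omega)
      rw [← h1]
      have h2 := hC1 (m₀ + n) (by omega) (by omega)
      rw [h2, show m₀ + n - m₀ - 1 = n - 1 from by omega]
  have hpre : seg y (k₂ * q) ρ <+: h (w k₂) := by
    rw [← hblock k₂]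
    refine ⟨seg y (k₂ * q + ρ) (q - ρ), ?_⟩
    rw [← seg_append]; congr 1; omega
  have hsuf : seg y i (q - ρ) <:+ h (w g₁) := by
    rw [← hblock g₁]
    refine ⟨seg y (g₁ * q) ρ, ?_⟩
    have e : seg y (g₁ * q) q = seg y (g₁ * q) ρ ++ seg y i (q - ρ) := by
      rw [← hg₁, ← seg_append]
      congr 1
      omega
    exact e.symm
  -- final cube construction
  have cubefinal : ∀ (V : ℕ → α) (s₁ s₂ m₂ : ℕ),
      (∀ k, k < m₂ → V k = w (s₂ + k)) →
      (∀ k, m₂ ≤ k → k < M → V k = w (s₁ + (k - m₂))) →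
      s₁ + (M - m₂) ≤ s₂ → m₂ ≤ M →
      (∀ k, k + n < M → V (k + n) = V k) → False := by
    intro V s₁ s₂ m₂ hV2 hV1 hgap hm₂M hVper
    have hz3 : seg V 0 (3 * n) = seg V 0 n ++ seg V 0 n ++ seg V 0 n :=
      seg_cube V n (fun k hk => hVper k (by omega))
    have hzne : seg V 0 n ≠ [] := by
      intro hc
      have := congrArg List.length hc
      simp at this
      omega
    rcases le_or_gt (3 * n) m₂ with hm | hm
    · have he : seg w s₂ (3 * n) = seg V 0 (3 * n) := by
        apply seg_ext
        intro j hj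
        rw [Nat.zero_add]
        exact (hV2 j (by omega)).symm
      exact hccf [] [] (seg w s₂ (3 * n)) (seg V 0 n) hzne
        (by simpa using seg_factorOf w s₂ (3 * n))
        (by rw [List.append_nil, he, hz3])
    · set A := 3 * n - m₂ with hAd
      set x₂' := seg w s₂ m₂ with hx₂'
      set x₁' := seg w s₁ A with hx₁'
      set t' := seg w (s₁ + A) (s₂ - (s₁ + A)) with ht'
      have hfa : FactorOf (x₁' ++ t' ++ x₂') w := by
        rw [List.append_assoc]
        have e : seg w s₁ (A + ((s₂ - (s₁ + A)) + m₂)) = x₁' ++ (t' ++ x₂') := by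
          rw [seg_append, seg_append, show s₁ + A + (s₂ - (s₁ + A)) = s₂ from by omega]
        rw [← e]
        exact seg_factorOf _ _ _
      have heq : x₂' ++ x₁' = seg V 0 n ++ seg V 0 n ++ seg V 0 n := by
        rw [← hz3]
        have e1 : seg V 0 (3 * n) = seg V 0 m₂ ++ seg V (0 + m₂) A := by
          rw [← seg_append]
          congr 1
          omega
        rw [e1]
        congr 1
        · apply seg_ext
          intro j hj
          rw [Nat.zero_add]
          exact (hV2 j hj).symm
        · apply seg_ext
          intro j hj
          rw [Nat.zero_add]
          have := hV1 (m₂ + j) (by omega) (by omega)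
          rw [this, show m₂ + j - m₂ = j from by omega]
      exact hccf x₁' t' x₂' (seg V 0 n) hzne hfa heq
  -- strong synchronization: two cases
  rcases hssm.2 (w k₂) (w g₁) c _ _ hS.symm hpre hsuf with hc | hc
  · -- c = w k₂ : hybrid letter belongs to x₂ side
    set V : ℕ → α := fun k => if k < m₀ + 1 then w (j₂ + k) else w (g₁ + 1 + (k - (m₀ + 1))) with hVd
    have hVval : ∀ k, V k = if k < m₀ + 1 then w (j₂ + k) else w (g₁ + 1 + (k - (m₀ + 1))) :=
      fun k => by rw [hVd]
    have hVh : ∀ k, k < M → h (V k) = Cb k := by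
      intro k hk
      rcases Nat.lt_or_ge k m₀ with h1 | h1
      · rw [hVval, if_pos (by omega), hC2 k h1]
      · rcases Nat.eq_or_lt_of_le h1 with h2 | h2
        · rw [hVval, if_pos (by omega), ← h2, hChyb, hS, hc, hm₀]
        · rw [hVval, if_neg (by omega), hC1 k (by omega) hk, Nat.sub_sub]
    exact cubefinal V (g₁ + 1) j₂ (m₀ + 1)
      (fun k hk => by rw [hVval, if_pos hk])
      (fun k hk1 hk2 => by rw [hVval, if_neg (by omega)])
      (by omega)
      (by omega)
      (fun k hk => hinj _ _ (by rw [hVh _ (by omega), hVh _ (by omega), hCper k hk]))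
  · -- c = w g₁ : hybrid letter belongs to x₁ side
    set V : ℕ → α := fun k => if k < m₀ then w (j₂ + k) else w (g₁ + (k - m₀)) with hVd
    have hVval : ∀ k, V k = if k < m₀ then w (j₂ + k) else w (g₁ + (k - m₀)) :=
      fun k => by rw [hVd]
    have hVh : ∀ k, k < M → h (V k) = Cb k := by
      intro k hk
      rcases Nat.lt_or_ge k m₀ with h1 | h1
      · rw [hVval, if_pos h1, hC2 k h1]
      · rcases Nat.eq_or_lt_of_le h1 with h2 | h2
        · rw [hVval, if_neg (by omega), ← h2, hChyb, hS, Nat.sub_self, Nat.add_zero, hc]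
        · rw [hVval, if_neg (by omega), hC1 k (by omega) hk]
          congr 2
          omega
    exact cubefinal V g₁ j₂ m₀
      (fun k hk => by rw [hVval, if_pos hk])
      (fun k hk1 hk2 => by rw [hVval, if_neg (by omega)])
      (by omega)
      (by omega)
      (fun k hk => hinj _ _ (by rw [hVh _ (by omega), hVh _ (by omega), hCper k hk]))
end
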